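/- arXiv:2405.01990 — 8 statements merged into one kernel-verified Lean document; each statement's English description precedes it below -/
import Mathlib

section
/- Let (X, Y, S) be jointly distributed with Y ∈ {0,1}, S ∈ [0,1], π = P(Y=1) ∈ (0,1), S_P = E[S | Y=1], S_N = E[S | Y=0], and suppose S is conditionally independent of X given Y. Then for any measurable classifier Ŷ = Ŷ(X) ∈ {0,1}, E[S·Ŷ] = π·S_P·TPR + (1−π)·S_N·FPR, where TPR = P(Ŷ=1 | Y=1) and FPR = P(Ŷ=1 | Y=0). -/
open MeasureTheory ProbabilityTheory Set

theorem soft_label_expectation_decomposition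
    {Ω : Type*} [MeasurableSpace Ω] [StandardBorelSpace Ω] [Nonempty Ω]
    (μ : Measure Ω) [IsProbabilityMeasure μ] {d : ℕ}
    (X : Ω → (Fin d → ℝ)) (Y S : Ω → ℝ) (Yh : (Fin d → ℝ) → ℝ)
    (hX : Measurable X) (hY : Measurable Y) (hS : Measurable S) (hYh : Measurable Yh)
    (hYb : ∀ ω, Y ω = 0 ∨ Y ω = 1) (hS01 : ∀ ω, S ω ∈ Set.Icc (0:ℝ) 1)
    (hYhb : ∀ x, Yh x = 0 ∨ Yh x = 1)
    (hm : MeasurableSpace.comap Y inferInstance ≤ ‹MeasurableSpace Ω›)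
    (hCI : CondIndepFun (MeasurableSpace.comap Y inferInstance) hm S X μ)
    (hπ : 0 < μ {ω | Y ω = 1}) (hπ1 : μ {ω | Y ω = 1} < 1) :
    ∫ ω, S ω * Yh (X ω) ∂μ =
      (μ {ω | Y ω = 1}).toReal *
        ((∫ ω in {ω | Y ω = 1}, S ω ∂μ) / (μ {ω | Y ω = 1}).toReal) *
        ((μ ({ω | Yh (X ω) = 1} ∩ {ω | Y ω = 1})).toReal / (μ {ω | Y ω = 1}).toReal) +
      (1 - (μ {ω | Y ω = 1}).toReal) *
        ((∫ ω in {ω | Y ω = 0}, S ω ∂μ) / (μ {ω | Y ω = 0}).toReal) *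
        ((μ ({ω | Yh (X ω) = 1} ∩ {ω | Y ω = 0})).toReal / (μ {ω | Y ω = 0}).toReal) := by
  set A : Set Ω := {ω | Y ω = 1} with hAdef
  set A0 : Set Ω := {ω | Y ω = 0} with hA0def
  set B : Set Ω := {ω | Yh (X ω) = 1} with hBdef
  have hAm' : MeasurableSet[MeasurableSpace.comap Y inferInstance] A :=
    ⟨{1}, measurableSet_singleton 1, rfl⟩
  have hA0m' : MeasurableSet[MeasurableSpace.comap Y inferInstance] A0 :=
    ⟨{0}, measurableSet_singleton 0, rfl⟩
  have hA : MeasurableSet A := hm _ hAm'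
  have hA0 : MeasurableSet A0 := hm _ hA0m'
  have hB : MeasurableSet B := (hYh.comp hX) (measurableSet_singleton 1)
  have hnot : ∀ ω, ω ∈ A → ω ∉ A0 := by
    intro ω h1 h0
    rw [Set.mem_setOf_eq] at h1 h0
    exact one_ne_zero (h1 ▸ h0)
  have hdisj : Disjoint A A0 := Set.disjoint_left.mpr hnot
  have hunion : A ∪ A0 = Set.univ := by
    ext ω
    simp only [Set.mem_union, Set.mem_setOf_eq, Set.mem_univ, iff_true]
    exact (hYb ω).symm.imp id id
  -- measure facts
  have hμA : μ A ≠ 0 := hπ.ne'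
  have hμA1 : μ A ≤ 1 := prob_le_one
  have hsum : μ A + μ A0 = 1 := by
    rw [← measure_union hdisj hA0, hunion, measure_univ]
  have hμA0 : μ A0 ≠ 0 := by
    intro h
    rw [h, add_zero] at hsum
    exact hπ1.ne hsum
  have haR : (μ A).toReal ≠ 0 := by
    simp [ENNReal.toReal_eq_zero_iff, hμA, measure_ne_top μ A]
  have ha0R : (μ A0).toReal ≠ 0 := by
    simp [ENNReal.toReal_eq_zero_iff, hμA0, measure_ne_top μ A0]
  have hsumR : (μ A).toReal + (μ A0).toReal = 1 := by
    rw [← ENNReal.toReal_add (measure_ne_top μ A) (measure_ne_top μ A0), hsum, ENNReal.toReal_one]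
  -- indicator integrals
  have hind : ∀ (E D : Set Ω), MeasurableSet E → MeasurableSet D → ∀ c : ℝ,
      ∫ ω in D, E.indicator (fun _ => c) ω ∂μ = c * (μ (E ∩ D)).toReal := by
    intro E D hE hD c
    rw [integral_indicator_const c hE, Measure.real, Measure.restrict_apply hE, smul_eq_mul, mul_comm]
  have hsplit : ∀ E : Set Ω, MeasurableSet E →
      (μ (E ∩ A)).toReal + (μ (E ∩ A0)).toReal = (μ E).toReal := by
    intro E hE
    rw [← ENNReal.toReal_add (measure_ne_top _ _) (measure_ne_top _ _),
      ← measure_union (hdisj.mono inter_subset_right inter_subset_right) (hE.inter hA0),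
      ← Set.inter_union_distrib_left, hunion, Set.inter_univ]
  -- conditional expectation of indicators w.r.t. comap Y is the two-atom formula
  have hcond : ∀ E : Set Ω, MeasurableSet E →
      (μ⟦E | MeasurableSpace.comap Y inferInstance⟧) =ᵐ[μ]
        fun ω => A.indicator (fun _ => (μ (E ∩ A)).toReal / (μ A).toReal) ω
          + A0.indicator (fun _ => (μ (E ∩ A0)).toReal / (μ A0).toReal) ω := by
    intro E hE
    refine (ae_eq_condExp_of_forall_setIntegral_eq hm
      ((integrable_const (1:ℝ)).indicator hE) (fun s _ _ => ?_) ?_ ?_).symm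
    · exact (((integrable_const _).indicator hA).add
        ((integrable_const _).indicator hA0)).integrableOn
    · rintro s ⟨t, ht, rfl⟩ -
      have hint_add : ∀ D : Set Ω, MeasurableSet D →
          ∫ ω in D, (A.indicator (fun _ => (μ (E ∩ A)).toReal / (μ A).toReal) ω
            + A0.indicator (fun _ => (μ (E ∩ A0)).toReal / (μ A0).toReal) ω) ∂μ
          = (μ (E ∩ A)).toReal / (μ A).toReal * (μ (A ∩ D)).toReal
            + (μ (E ∩ A0)).toReal / (μ A0).toReal * (μ (A0 ∩ D)).toReal := by
        intro D hD
        rw [integral_add (((integrable_const ((μ (E ∩ A)).toReal / (μ A).toReal)).indicator hA).restrict)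
          (((integrable_const ((μ (E ∩ A0)).toReal / (μ A0).toReal)).indicator hA0).restrict),
          hind _ _ hA hD, hind _ _ hA0 hD]
      by_cases h1 : (1:ℝ) ∈ t <;> by_cases h0 : (0:ℝ) ∈ t
      · have hseq : Y ⁻¹' t = Set.univ := by
          ext ω
          rcases hYb ω with h | h <;>
            simp [Set.mem_preimage, h, h0, h1]
        rw [hseq, hint_add _ MeasurableSet.univ, hind _ _ hE MeasurableSet.univ,
          Set.inter_univ, Set.inter_univ, one_mul, Set.inter_univ,
          div_mul_cancel₀ _ haR, div_mul_cancel₀ _ ha0R, hsplit E hE]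
      · have hseq : Y ⁻¹' t = A := by
          ext ω
          rcases hYb ω with h | h <;>
            simp [Set.mem_preimage, hAdef, Set.mem_setOf_eq, h, h0, h1]
        rw [hseq, hint_add _ hA, hind _ _ hE hA, Set.inter_self, one_mul,
          (Set.disjoint_iff_inter_eq_empty.mp hdisj.symm), measure_empty,
          div_mul_cancel₀ _ haR]
        simp
      · have hseq : Y ⁻¹' t = A0 := by
          ext ω
          rcases hYb ω with h | h <;>
            simp [Set.mem_preimage, hA0def, Set.mem_setOf_eq, h, h0, h1]
        rw [hseq, hint_add _ hA0, hind _ _ hE hA0, Set.inter_self, one_mul,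
          (Set.disjoint_iff_inter_eq_empty.mp hdisj), measure_empty,
          div_mul_cancel₀ _ ha0R]
        simp
      · have hseq : Y ⁻¹' t = ∅ := by
          ext ω
          rcases hYb ω with h | h <;>
            simp [Set.mem_preimage, h, h0, h1]
        rw [hseq]
        simp
    · exact ((stronglyMeasurable_const.indicator hAm').add
        (stronglyMeasurable_const.indicator hA0m')).aestronglyMeasurable
  -- the conditional expectation is a.e. constant on each atom
  have hconstA : ∀ E : Set Ω, MeasurableSet E →
      (μ⟦E | MeasurableSpace.comap Y inferInstance⟧) =ᵐ[μ.restrict A]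
        fun _ => (μ (E ∩ A)).toReal / (μ A).toReal := by
    intro E hE
    filter_upwards [ae_restrict_of_ae (hcond E hE), ae_restrict_mem hA] with ω hω hωA
    rw [hω, Set.indicator_of_mem hωA, Set.indicator_of_notMem (hnot ω hωA), add_zero]
  have hconstA0 : ∀ E : Set Ω, MeasurableSet E →
      (μ⟦E | MeasurableSpace.comap Y inferInstance⟧) =ᵐ[μ.restrict A0]
        fun _ => (μ (E ∩ A0)).toReal / (μ A0).toReal := by
    intro E hE
    filter_upwards [ae_restrict_of_ae (hcond E hE), ae_restrict_mem hA0] with ω hω hωA0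
    have hωA : ω ∉ A := fun h => hnot ω h hωA0
    rw [hω, Set.indicator_of_mem hωA0, Set.indicator_of_notMem hωA, zero_add]
  -- key factorization of measures from conditional independence
  have hCI' : CondIndepFun (MeasurableSpace.comap Y inferInstance) hm S (fun ω => Yh (X ω)) μ :=
    hCI.comp measurable_id hYh
  have hprod : ∀ (D : Set Ω), MeasurableSet D →
      MeasurableSet[MeasurableSpace.comap Y inferInstance] D →
      (∀ E : Set Ω, MeasurableSet E →
        (μ⟦E | MeasurableSpace.comap Y inferInstance⟧) =ᵐ[μ.restrict D]
          fun _ => (μ (E ∩ D)).toReal / (μ D).toReal) →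
      ∀ C : Set ℝ, MeasurableSet C →
      (μ (S ⁻¹' C ∩ B ∩ D)).toReal
        = (μ (S ⁻¹' C ∩ D)).toReal * ((μ (B ∩ D)).toReal / (μ D).toReal) := by
    intro D hD hDm' hDconst C hC
    have hkey := (condIndepFun_iff_condExp_inter_preimage_eq_mul hS (hYh.comp hX)).mp
      hCI' C {1} hC (measurableSet_singleton 1)
    have hBeq : (Yh ∘ X) ⁻¹' {1} = B := rfl
    rw [hBeq] at hkey
    have hint1 : ∫ ω in D, (μ⟦S ⁻¹' C ∩ B | MeasurableSpace.comap Y inferInstance⟧) ω ∂μ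
        = (μ (S ⁻¹' C ∩ B ∩ D)).toReal := by
      rw [setIntegral_condExp hm ((integrable_const 1).indicator ((hS hC).inter hB)) hDm',
        hind _ _ ((hS hC).inter hB) hD, one_mul]
    have hint2 : ∫ ω in D, (μ⟦S ⁻¹' C ∩ B | MeasurableSpace.comap Y inferInstance⟧) ω ∂μ
        = ((μ (S ⁻¹' C ∩ D)).toReal / (μ D).toReal) * ((μ (B ∩ D)).toReal / (μ D).toReal)
          * (μ D).toReal := by
      rw [setIntegral_congr_ae hD (hkey.mono fun ω h _ => h)]
      have heqc : (fun ω => (μ⟦S ⁻¹' C | MeasurableSpace.comap Y inferInstance⟧) ω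
            * (μ⟦B | MeasurableSpace.comap Y inferInstance⟧) ω)
          =ᵐ[μ.restrict D] (fun _ => ((μ (S ⁻¹' C ∩ D)).toReal / (μ D).toReal)
            * ((μ (B ∩ D)).toReal / (μ D).toReal)) := by
        filter_upwards [hDconst _ (hS hC), hDconst _ hB] with ω h1 h2
        rw [h1, h2]
      rw [integral_congr_ae heqc, setIntegral_const, Measure.real, smul_eq_mul, mul_comm]
    rw [hint1] at hint2
    rw [hint2]
    by_cases hDz : (μ D).toReal = 0
    · simp [hDz]
    · field_simp
  -- layer cake: transfer the set-level factorization to the integral of S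
  have hSint : Integrable S μ := by
    refine (integrable_const (1:ℝ)).mono' hS.aestronglyMeasurable (ae_of_all _ fun ω => ?_)
    rw [Real.norm_eq_abs, abs_of_nonneg (hS01 ω).1]
    exact (hS01 ω).2
  have hlayer : ∀ D : Set Ω, MeasurableSet D →
      (∀ C : Set ℝ, MeasurableSet C → (μ (S ⁻¹' C ∩ B ∩ D)).toReal
        = (μ (S ⁻¹' C ∩ D)).toReal * ((μ (B ∩ D)).toReal / (μ D).toReal)) →
      ∫ ω in B ∩ D, S ω ∂μ = ((μ (B ∩ D)).toReal / (μ D).toReal) * ∫ ω in D, S ω ∂μ := by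
    intro D hD hfac
    rw [(hSint.restrict).integral_eq_integral_meas_lt
        (ae_of_all _ fun ω => (hS01 ω).1),
      (hSint.restrict).integral_eq_integral_meas_lt
        (ae_of_all _ fun ω => (hS01 ω).1), ← integral_const_mul]
    refine setIntegral_congr_fun measurableSet_Ioi (fun t _ => ?_)
    have hmeas : MeasurableSet (S ⁻¹' Set.Ioi t) := hS measurableSet_Ioi
    have h1 : {a | t < S a} = S ⁻¹' Set.Ioi t := rfl
    rw [h1, Measure.real, Measure.real, Measure.restrict_apply hmeas, Measure.restrict_apply hmeas,
      ← Set.inter_assoc, hfac _ measurableSet_Ioi, mul_comm]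
  -- assemble
  have hpoint : ∫ ω, S ω * Yh (X ω) ∂μ = ∫ ω, B.indicator S ω ∂μ := by
    refine integral_congr_ae (ae_of_all _ fun ω => ?_)
    rcases hYhb (X ω) with h | h
    · have hω : ω ∉ B := by simp [hBdef, Set.mem_setOf_eq, h]
      show S ω * Yh (X ω) = _
      rw [Set.indicator_of_notMem hω, h, mul_zero]
    · have hω : ω ∈ B := by simp [hBdef, Set.mem_setOf_eq, h]
      show S ω * Yh (X ω) = _
      rw [Set.indicator_of_mem hω, h, mul_one]
  have hBsplit : B = (B ∩ A) ∪ (B ∩ A0) := by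
    rw [← Set.inter_union_distrib_left, hunion, Set.inter_univ]
  have hfinal : ∫ ω, S ω * Yh (X ω) ∂μ
      = ((μ (B ∩ A)).toReal / (μ A).toReal) * ∫ ω in A, S ω ∂μ
        + ((μ (B ∩ A0)).toReal / (μ A0).toReal) * ∫ ω in A0, S ω ∂μ := by
    rw [hpoint, integral_indicator hB, hBsplit,
      setIntegral_union (hdisj.mono Set.inter_subset_right Set.inter_subset_right)
        (hB.inter hA0) hSint.integrableOn hSint.integrableOn,
      hlayer A hA (hprod A hA hAm' hconstA), hlayer A0 hA0 (hprod A0 hA0 hA0m' hconstA0),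
      ← hBsplit]
  rw [hfinal]
  have h1A0 : (1 : ℝ) - (μ A).toReal = (μ A0).toReal := by linarith [hsumR]
  rw [h1A0]
  field_simp
end

section
/- Under the Generalized SCAR assumption (S conditionally independent of X given Y), with π = P(Y=1) ∈ (0,1), S_P = E[S|Y=1], S_N = E[S|Y=0], and 0 < πS_P + (1−π)S_N < 1, define TPR_SPU = E[S·Ŷ]/E[S] and FPR_SPU = E[(1−S)·Ŷ]/E[1−S] for a classifier Ŷ = Ŷ(X). Then TPR_SPU = a·TPR + b·FPR and FPR_SPU = c·TPR + d·FPR, where a = πS_P/(πS_P+(1−π)S_N), b = (1−π)S_N/(πS_P+(1−π)S_N), c = π(1−S_P)/(1−πS_P−(1−π)S_N), d = (1−π)(1−S_N)/(1−πS_P−(1−π)S_N). -/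
open MeasureTheory ProbabilityTheory Set

/-- Conditional expectation of an indicator with respect to the σ-algebra generated by a
binary random variable `Y` is given by the explicit two-atom formula. -/
lemma binary_condexp_indicator {Ω : Type*} [mΩ : MeasurableSpace Ω]
    (μ : Measure Ω) [IsProbabilityMeasure μ] (Y : Ω → ℝ) (hY : Measurable Y)
    (hYb : ∀ ω, Y ω = 0 ∨ Y ω = 1)
    (h1 : μ {ω | Y ω = 1} ≠ 0) (h0 : μ {ω | Y ω = 0} ≠ 0)
    {A : Set Ω} (hA : MeasurableSet A) :
    μ[A.indicator (fun _ => (1:ℝ)) | MeasurableSpace.comap Y inferInstance] =ᵐ[μ]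
      fun ω => if Y ω = 1 then
          (μ (A ∩ {ω | Y ω = 1})).toReal / (μ {ω | Y ω = 1}).toReal
        else (μ (A ∩ {ω | Y ω = 0})).toReal / (μ {ω | Y ω = 0}).toReal := by
  set A1 : Set Ω := {ω | Y ω = 1} with hA1def
  set A0 : Set Ω := {ω | Y ω = 0} with hA0def
  have hA1m : MeasurableSet A1 := hY (measurableSet_singleton 1)
  have hA0m : MeasurableSet A0 := hY (measurableSet_singleton 0)
  have hA0c : A0 = A1ᶜ := by
    ext ω
    simp only [hA0def, hA1def, Set.mem_setOf_eq, Set.mem_compl_iff]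
    rcases hYb ω with h | h <;> simp [h]
  set c1 : ℝ := (μ (A ∩ A1)).toReal / (μ A1).toReal with hc1
  set c0 : ℝ := (μ (A ∩ A0)).toReal / (μ A0).toReal with hc0
  set g : Ω → ℝ := fun ω => if Y ω = 1 then c1 else c0 with hg
  have hπ1 : (μ A1).toReal ≠ 0 := ENNReal.toReal_ne_zero.mpr ⟨h1, measure_ne_top μ _⟩
  have hπ0 : (μ A0).toReal ≠ 0 := ENNReal.toReal_ne_zero.mpr ⟨h0, measure_ne_top μ _⟩
  have hgme : Measurable g := Measurable.ite hA1m measurable_const measurable_const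
  have hgint : Integrable g μ := by
    refine (integrable_const (|c1| + |c0|)).mono' hgme.aestronglyMeasurable ?_
    filter_upwards with ω
    simp only [hg, Real.norm_eq_abs]
    split_ifs
    · nlinarith [abs_nonneg c0]
    · nlinarith [abs_nonneg c1]
  have hfint : Integrable (A.indicator (fun _ => (1:ℝ))) μ :=
    (integrable_const (1:ℝ)).indicator hA
  have intA1g : ∫ ω in A1, g ω ∂μ = (μ (A ∩ A1)).toReal := by
    have heq : ∫ ω in A1, g ω ∂μ = ∫ _ω in A1, c1 ∂μ :=
      setIntegral_congr_fun hA1m (fun ω hω => if_pos hω)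
    rw [heq, setIntegral_const, measureReal_def, smul_eq_mul, hc1]
    field_simp
  have intA0g : ∫ ω in A0, g ω ∂μ = (μ (A ∩ A0)).toReal := by
    have heq : ∫ ω in A0, g ω ∂μ = ∫ _ω in A0, c0 ∂μ := by
      refine setIntegral_congr_fun hA0m (fun ω hω => if_neg ?_)
      have hω' : Y ω = 0 := hω
      rw [hω']; norm_num
    rw [heq, setIntegral_const, measureReal_def, smul_eq_mul, hc0]
    field_simp
  have intA1f : ∫ ω in A1, A.indicator (fun _ => (1:ℝ)) ω ∂μ = (μ (A ∩ A1)).toReal := by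
    rw [setIntegral_indicator hA, setIntegral_const, smul_eq_mul, mul_one, Set.inter_comm, measureReal_def]
  have intA0f : ∫ ω in A0, A.indicator (fun _ => (1:ℝ)) ω ∂μ = (μ (A ∩ A0)).toReal := by
    rw [setIntegral_indicator hA, setIntegral_const, smul_eq_mul, mul_one, Set.inter_comm, measureReal_def]
  have hsplit : ∀ f : Ω → ℝ, Integrable f μ →
      ∫ ω, f ω ∂μ = ∫ ω in A1, f ω ∂μ + ∫ ω in A0, f ω ∂μ := by
    intro f hf
    rw [hA0c]
    exact (integral_add_compl hA1m hf).symm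
  refine (ae_eq_condExp_of_forall_setIntegral_eq hY.comap_le hfint
    (fun s _ _ => hgint.integrableOn) ?_ ?_).symm
  · rintro s ⟨t, ht, rfl⟩ -
    by_cases h1t : (1:ℝ) ∈ t <;> by_cases h0t : (0:ℝ) ∈ t
    · have hs : Y ⁻¹' t = Set.univ := by
        ext ω
        simp only [Set.mem_preimage, Set.mem_univ, iff_true]
        rcases hYb ω with h | h <;> rw [h] <;> assumption
      rw [hs, Measure.restrict_univ, hsplit g hgint, hsplit _ hfint,
        intA1g, intA0g, intA1f, intA0f]
    · have hs : Y ⁻¹' t = A1 := by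
        ext ω
        simp only [Set.mem_preimage, hA1def, Set.mem_setOf_eq]
        rcases hYb ω with h | h <;> rw [h] <;> simp [h0t, h1t]
      rw [hs, intA1g, intA1f]
    · have hs : Y ⁻¹' t = A0 := by
        ext ω
        simp only [Set.mem_preimage, hA0def, Set.mem_setOf_eq]
        rcases hYb ω with h | h <;> rw [h] <;> simp [h0t, h1t]
      rw [hs, intA0g, intA0f]
    · have hs : Y ⁻¹' t = (∅ : Set Ω) := by
        ext ω
        simp only [Set.mem_preimage, Set.mem_empty_iff_false, iff_false]
        rcases hYb ω with h | h <;> rw [h] <;> assumption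
      rw [hs]
      simp
  · refine StronglyMeasurable.aestronglyMeasurable ?_
    refine Measurable.stronglyMeasurable ?_
    exact Measurable.ite ⟨{(1:ℝ)}, measurableSet_singleton 1, rfl⟩
      measurable_const measurable_const

/-- Conditional independence given a binary `Y` yields independence under both
conditional measures. -/
lemma indepFun_cond_of_condIndepFun {Ω : Type*} [mΩ : MeasurableSpace Ω]
    [StandardBorelSpace Ω] [Nonempty Ω]
    (μ : Measure Ω) [IsProbabilityMeasure μ] {d : ℕ}
    (X : Ω → (Fin d → ℝ)) (Y S : Ω → ℝ)
    (hX : Measurable X) (hY : Measurable Y) (hS : Measurable S)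
    (hYb : ∀ ω, Y ω = 0 ∨ Y ω = 1)
    (hm : MeasurableSpace.comap Y inferInstance ≤ mΩ)
    (hCI : CondIndepFun (MeasurableSpace.comap Y inferInstance) hm S X μ)
    (h1 : μ {ω | Y ω = 1} ≠ 0) (h0 : μ {ω | Y ω = 0} ≠ 0) :
    IndepFun S X (μ[|{ω | Y ω = 1}]) ∧ IndepFun S X (μ[|{ω | Y ω = 0}]) := by
  set A1 : Set Ω := {ω | Y ω = 1} with hA1def
  set A0 : Set Ω := {ω | Y ω = 0} with hA0def
  have hA1m : MeasurableSet A1 := hY (measurableSet_singleton 1)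
  have hA0m : MeasurableSet A0 := hY (measurableSet_singleton 0)
  have hπ1 : (μ A1).toReal ≠ 0 := ENNReal.toReal_ne_zero.mpr ⟨h1, measure_ne_top μ _⟩
  have hπ0 : (μ A0).toReal ≠ 0 := ENNReal.toReal_ne_zero.mpr ⟨h0, measure_ne_top μ _⟩
  have main : ∀ s t, MeasurableSet s → MeasurableSet t →
      ((μ[|A1]) (S ⁻¹' s ∩ X ⁻¹' t) = (μ[|A1]) (S ⁻¹' s) * (μ[|A1]) (X ⁻¹' t))
      ∧ ((μ[|A0]) (S ⁻¹' s ∩ X ⁻¹' t) = (μ[|A0]) (S ⁻¹' s) * (μ[|A0]) (X ⁻¹' t)) := by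
    intro s t hs ht
    have hSs : MeasurableSet (S ⁻¹' s) := hS hs
    have hXt : MeasurableSet (X ⁻¹' t) := hX ht
    have hprod := (condIndepFun_iff_condExp_inter_preimage_eq_mul hS hX).mp hCI s t hs ht
    have eqC := binary_condexp_indicator μ Y hY hYb h1 h0 (hSs.inter hXt)
    have eqA := binary_condexp_indicator μ Y hY hYb h1 h0 hSs
    have eqB := binary_condexp_indicator μ Y hY hYb h1 h0 hXt
    have hae : ∀ᵐ ω ∂μ,
        (if Y ω = 1 then (μ ((S ⁻¹' s ∩ X ⁻¹' t) ∩ A1)).toReal / (μ A1).toReal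
          else (μ ((S ⁻¹' s ∩ X ⁻¹' t) ∩ A0)).toReal / (μ A0).toReal)
        = (if Y ω = 1 then (μ ((S ⁻¹' s) ∩ A1)).toReal / (μ A1).toReal
            else (μ ((S ⁻¹' s) ∩ A0)).toReal / (μ A0).toReal)
          * (if Y ω = 1 then (μ ((X ⁻¹' t) ∩ A1)).toReal / (μ A1).toReal
            else (μ ((X ⁻¹' t) ∩ A0)).toReal / (μ A0).toReal) := by
      filter_upwards [hprod, eqC, eqA, eqB] with ω hc hC hA hB
      rw [← hC, ← hA, ← hB]
      exact hc
    have hkey : ∀ (T : Set Ω), μ T ≠ 0 → ∃ ω, ω ∈ T ∧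
        ((if Y ω = 1 then (μ ((S ⁻¹' s ∩ X ⁻¹' t) ∩ A1)).toReal / (μ A1).toReal
          else (μ ((S ⁻¹' s ∩ X ⁻¹' t) ∩ A0)).toReal / (μ A0).toReal)
        = (if Y ω = 1 then (μ ((S ⁻¹' s) ∩ A1)).toReal / (μ A1).toReal
            else (μ ((S ⁻¹' s) ∩ A0)).toReal / (μ A0).toReal)
          * (if Y ω = 1 then (μ ((X ⁻¹' t) ∩ A1)).toReal / (μ A1).toReal
            else (μ ((X ⁻¹' t) ∩ A0)).toReal / (μ A0).toReal)) := fun T hT =>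
      Measure.exists_mem_of_measure_ne_zero_of_ae hT (ae_restrict_of_ae hae)
    constructor
    · obtain ⟨ω₁, hω₁, hPω⟩ := hkey A1 h1
      have hY1 : Y ω₁ = 1 := hω₁
      rw [if_pos hY1, if_pos hY1, if_pos hY1] at hPω
      rw [cond_apply hA1m, cond_apply hA1m, cond_apply hA1m]
      have hfin : ∀ B : Set Ω, (μ A1)⁻¹ * μ (A1 ∩ B) ≠ ⊤ :=
        fun B => ENNReal.mul_ne_top (ENNReal.inv_ne_top.mpr h1) (measure_ne_top μ _)
      refine (ENNReal.toReal_eq_toReal_iff' (hfin _) (ENNReal.mul_ne_top (hfin _) (hfin _))).mp ?_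
      rw [ENNReal.toReal_mul, ENNReal.toReal_mul, ENNReal.toReal_mul, ENNReal.toReal_mul,
        ENNReal.toReal_inv]
      rw [Set.inter_comm A1, Set.inter_comm A1, Set.inter_comm A1]
      field_simp [hπ1, hπ0] at hPω ⊢
      nlinarith [hPω]
    · obtain ⟨ω₀, hω₀, hPω⟩ := hkey A0 h0
      have hY0 : Y ω₀ = 0 := hω₀
      have hY0' : ¬ (Y ω₀ = 1) := by rw [hY0]; norm_num
      rw [if_neg hY0', if_neg hY0', if_neg hY0'] at hPω
      rw [cond_apply hA0m, cond_apply hA0m, cond_apply hA0m]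
      have hfin : ∀ B : Set Ω, (μ A0)⁻¹ * μ (A0 ∩ B) ≠ ⊤ :=
        fun B => ENNReal.mul_ne_top (ENNReal.inv_ne_top.mpr h0) (measure_ne_top μ _)
      refine (ENNReal.toReal_eq_toReal_iff' (hfin _) (ENNReal.mul_ne_top (hfin _) (hfin _))).mp ?_
      rw [ENNReal.toReal_mul, ENNReal.toReal_mul, ENNReal.toReal_mul, ENNReal.toReal_mul,
        ENNReal.toReal_inv]
      rw [Set.inter_comm A0, Set.inter_comm A0, Set.inter_comm A0]
      field_simp [hπ1, hπ0] at hPω ⊢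
      nlinarith [hPω]
  constructor
  · rw [indepFun_iff_measure_inter_preimage_eq_mul]
    exact fun s t hs ht => (main s t hs ht).1
  · rw [indepFun_iff_measure_inter_preimage_eq_mul]
    exact fun s t hs ht => (main s t hs ht).2

/-- Factorization of a set integral of a product of independent (under the conditional
measure) random variables, one of which is an indicator. -/
lemma setIntegral_mul_factor {Ω : Type*} [mΩ : MeasurableSpace Ω]
    (μ : Measure Ω) [IsProbabilityMeasure μ] (S Z : Ω → ℝ)
    (hS : Measurable S) (hZ : Measurable Z)
    (hS1 : ∀ ω, |S ω| ≤ 1) (hZb : ∀ ω, Z ω = 0 ∨ Z ω = 1)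
    {A : Set Ω} (hA : MeasurableSet A) (hA0 : μ A ≠ 0)
    (hind : IndepFun S Z (μ[|A])) :
    ∫ ω in A, S ω * Z ω ∂μ
      = (∫ ω in A, S ω ∂μ) * (μ (A ∩ {ω | Z ω = 1})).toReal / (μ A).toReal := by
  have hμA : (μ A).toReal ≠ 0 := ENNReal.toReal_ne_zero.mpr ⟨hA0, measure_ne_top μ _⟩
  haveI : IsProbabilityMeasure (μ[|A]) := cond_isProbabilityMeasure hA0
  have hint : ∀ f : Ω → ℝ, ∫ ω, f ω ∂(μ[|A]) = (μ A).toReal⁻¹ * ∫ ω in A, f ω ∂μ := by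
    intro f
    rw [ProbabilityTheory.cond, integral_smul_measure, ENNReal.toReal_inv, smul_eq_mul]
  have hZ1 : ∀ ω, |Z ω| ≤ 1 := by
    intro ω
    rcases hZb ω with h | h <;> rw [h] <;> norm_num
  have hSint : Integrable S (μ[|A]) :=
    (integrable_const (1:ℝ)).mono' hS.aestronglyMeasurable (ae_of_all _ hS1)
  have hZint : Integrable Z (μ[|A]) :=
    (integrable_const (1:ℝ)).mono' hZ.aestronglyMeasurable (ae_of_all _ hZ1)
  have hmul : ∫ ω, S ω * Z ω ∂(μ[|A]) = (∫ ω, S ω ∂(μ[|A])) * ∫ ω, Z ω ∂(μ[|A]) :=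
    hind.integral_mul_eq_mul_integral hSint.aestronglyMeasurable hZint.aestronglyMeasurable
  have hZset : MeasurableSet {ω | Z ω = 1} := hZ (measurableSet_singleton 1)
  have hZind : Z = ({ω | Z ω = 1}).indicator (1 : Ω → ℝ) := by
    funext ω
    rcases hZb ω with h | h <;> simp [Set.indicator_apply, Set.mem_setOf_eq, h]
  have hZval : ∫ ω, Z ω ∂(μ[|A]) = (μ A).toReal⁻¹ * (μ (A ∩ {ω | Z ω = 1})).toReal := by
    conv_lhs => rw [hZind]
    rw [integral_indicator_one hZset, measureReal_def, cond_apply hA, ENNReal.toReal_mul, ENNReal.toReal_inv]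
  have h1 := hint (fun ω => S ω * Z ω)
  have h2 := hint S
  rw [h1, h2, hZval] at hmul
  have h3 : ∫ ω in A, S ω * Z ω ∂μ
      = (μ A).toReal * ((μ A).toReal⁻¹ * ∫ ω in A, S ω * Z ω ∂μ) := by
    field_simp
  rw [h3, hmul]
  field_simp

theorem spu_rates_linear_in_true_rates
    {Ω : Type*} [MeasurableSpace Ω] [StandardBorelSpace Ω] [Nonempty Ω]
    (μ : Measure Ω) [IsProbabilityMeasure μ] {d : ℕ}
    (X : Ω → (Fin d → ℝ)) (Y S : Ω → ℝ) (Yh : (Fin d → ℝ) → ℝ)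
    (hX : Measurable X) (hY : Measurable Y) (hS : Measurable S) (hYh : Measurable Yh)
    (hYb : ∀ ω, Y ω = 0 ∨ Y ω = 1) (hS01 : ∀ ω, S ω ∈ Set.Icc (0:ℝ) 1)
    (hYhb : ∀ x, Yh x = 0 ∨ Yh x = 1)
    (hm : MeasurableSpace.comap Y inferInstance ≤ ‹MeasurableSpace Ω›)
    (hCI : CondIndepFun (MeasurableSpace.comap Y inferInstance) hm S X μ)
    (π SP SN TPR FPR TPRS FPRS : ℝ)
    (hπdef : π = (μ {ω | Y ω = 1}).toReal)
    (hπpos : 0 < π) (hπlt : π < 1)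
    (hSP : SP = (∫ ω in {ω | Y ω = 1}, S ω ∂μ) / π)
    (hSN : SN = (∫ ω in {ω | Y ω = 0}, S ω ∂μ) / (1 - π))
    (hTPR : TPR = (μ ({ω | Yh (X ω) = 1} ∩ {ω | Y ω = 1})).toReal / π)
    (hFPR : FPR = (μ ({ω | Yh (X ω) = 1} ∩ {ω | Y ω = 0})).toReal / (1 - π))
    (hTPRS : TPRS = (∫ ω, S ω * Yh (X ω) ∂μ) / (∫ ω, S ω ∂μ))
    (hFPRS : FPRS = (∫ ω, (1 - S ω) * Yh (X ω) ∂μ) / (∫ ω, (1 - S ω) ∂μ))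
    (hden0 : 0 < π * SP + (1 - π) * SN) (hden1 : π * SP + (1 - π) * SN < 1) :
    TPRS = (π * SP / (π * SP + (1 - π) * SN)) * TPR
            + ((1 - π) * SN / (π * SP + (1 - π) * SN)) * FPR ∧
    FPRS = (π * (1 - SP) / (1 - π * SP - (1 - π) * SN)) * TPR
            + ((1 - π) * (1 - SN) / (1 - π * SP - (1 - π) * SN)) * FPR := by
  set A1 : Set Ω := {ω | Y ω = 1} with hA1def
  set A0 : Set Ω := {ω | Y ω = 0} with hA0def
  set B : Set Ω := {ω | Yh (X ω) = 1} with hBdef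
  set Z : Ω → ℝ := fun ω => Yh (X ω) with hZdef
  have hZm : Measurable Z := hYh.comp hX
  have hA1m : MeasurableSet A1 := hY (measurableSet_singleton 1)
  have hA0m : MeasurableSet A0 := hY (measurableSet_singleton 0)
  have hBm : MeasurableSet B := hZm (measurableSet_singleton 1)
  have hA0c : A0 = A1ᶜ := by
    ext ω
    simp only [hA0def, hA1def, Set.mem_setOf_eq, Set.mem_compl_iff]
    rcases hYb ω with h | h <;> simp [h]
  have hπ1 : (μ A1).toReal = π := hπdef.symm
  have h1 : μ A1 ≠ 0 := by
    intro h
    rw [h] at hπ1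
    simp at hπ1
    linarith
  have hμA0 : (μ A0).toReal = 1 - π := by
    rw [hA0c, prob_compl_eq_one_sub hA1m,
      ENNReal.toReal_sub_of_le prob_le_one ENNReal.one_ne_top, ENNReal.toReal_one, hπ1]
  have h0 : μ A0 ≠ 0 := by
    intro h
    rw [h] at hμA0
    simp at hμA0
    linarith
  have hS1 : ∀ ω, |S ω| ≤ 1 := by
    intro ω
    obtain ⟨h0', h1'⟩ := hS01 ω
    rw [abs_le]
    constructor <;> linarith
  have hZb : ∀ ω, Z ω = 0 ∨ Z ω = 1 := fun ω => hYhb (X ω)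
  have hZ1 : ∀ ω, |Z ω| ≤ 1 := by
    intro ω
    rcases hZb ω with h | h <;> rw [h] <;> norm_num
  -- independence under the conditional measures
  obtain ⟨hI1, hI0⟩ := indepFun_cond_of_condIndepFun μ X Y S hX hY hS hYb hm hCI h1 h0
  have hI1' : IndepFun S Z (μ[|A1]) := hI1.comp measurable_id hYh
  have hI0' : IndepFun S Z (μ[|A0]) := hI0.comp measurable_id hYh
  -- factorizations on each atom
  have key1 := setIntegral_mul_factor μ S Z hS hZm hS1 hZb hA1m h1 hI1'
  have key0 := setIntegral_mul_factor μ S Z hS hZm hS1 hZb hA0m h0 hI0'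
  -- basic integrability
  have hSZm : Measurable (fun ω => S ω * Z ω) := hS.mul hZm
  have hSZint : Integrable (fun ω => S ω * Z ω) μ := by
    refine (integrable_const (1:ℝ)).mono' hSZm.aestronglyMeasurable ?_
    filter_upwards with ω
    rw [Real.norm_eq_abs, abs_mul]
    calc |S ω| * |Z ω| ≤ 1 * 1 := by
          exact mul_le_mul (hS1 ω) (hZ1 ω) (abs_nonneg _) zero_le_one
      _ = 1 := one_mul 1
  have hSint : Integrable S μ :=
    (integrable_const (1:ℝ)).mono' hS.aestronglyMeasurable (ae_of_all _ hS1)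
  have hZint : Integrable Z μ :=
    (integrable_const (1:ℝ)).mono' hZm.aestronglyMeasurable (ae_of_all _ hZ1)
  have hsplit : ∀ f : Ω → ℝ, Integrable f μ →
      ∫ ω, f ω ∂μ = ∫ ω in A1, f ω ∂μ + ∫ ω in A0, f ω ∂μ := by
    intro f hf
    rw [hA0c]
    exact (integral_add_compl hA1m hf).symm
  -- values of the pieces
  have hSPval : ∫ ω in A1, S ω ∂μ = π * SP := by
    rw [hSP]
    field_simp
  have hSNval : ∫ ω in A0, S ω ∂μ = (1 - π) * SN := by
    rw [hSN]
    have : (1:ℝ) - π ≠ 0 := by linarith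
    field_simp
  have hTPRval : (μ (A1 ∩ B)).toReal = π * TPR := by
    rw [Set.inter_comm, hTPR]
    field_simp
  have hFPRval : (μ (A0 ∩ B)).toReal = (1 - π) * FPR := by
    rw [Set.inter_comm, hFPR]
    have : (1:ℝ) - π ≠ 0 := by linarith
    field_simp
  have hπne : π ≠ 0 := ne_of_gt hπpos
  have h1πne : (1:ℝ) - π ≠ 0 := by intro h; linarith [hπlt]; 
  -- the two atom integrals of S * Z
  have key1' : ∫ ω in A1, S ω * Z ω ∂μ = π * SP * TPR := by
    rw [key1, hSPval, hTPRval, hπ1]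
    field_simp
  have key0' : ∫ ω in A0, S ω * Z ω ∂μ = (1 - π) * SN * FPR := by
    rw [key0, hSNval, hFPRval, hμA0]
    field_simp
  -- total integrals
  have hintSZ : ∫ ω, S ω * Z ω ∂μ = π * SP * TPR + (1 - π) * SN * FPR := by
    rw [hsplit _ hSZint, key1', key0']
  have hintS : ∫ ω, S ω ∂μ = π * SP + (1 - π) * SN := by
    rw [hsplit _ hSint, hSPval, hSNval]
  have hZind : Z = B.indicator (fun _ => (1:ℝ)) := by
    funext ω
    rcases hZb ω with h | h <;> simp [Set.indicator_apply, hBdef, Set.mem_setOf_eq, hZdef ▸ h, h]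
  have hintZ1 : ∫ ω in A1, Z ω ∂μ = π * TPR := by
    conv_lhs => rw [hZind]
    rw [setIntegral_indicator hBm, setIntegral_const, smul_eq_mul, mul_one, measureReal_def, hTPRval]
  have hintZ0 : ∫ ω in A0, Z ω ∂μ = (1 - π) * FPR := by
    conv_lhs => rw [hZind]
    rw [setIntegral_indicator hBm, setIntegral_const, smul_eq_mul, mul_one, measureReal_def, hFPRval]
  have hintZ : ∫ ω, Z ω ∂μ = π * TPR + (1 - π) * FPR := by
    rw [hsplit _ hZint, hintZ1, hintZ0]
  -- integrals with (1 - S)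
  have hint1S : ∫ ω, (1 - S ω) ∂μ = 1 - (π * SP + (1 - π) * SN) := by
    rw [integral_sub (integrable_const 1) hSint, integral_const, measureReal_def, measure_univ,
      ENNReal.toReal_one, one_smul, hintS]
  have hint1SZ : ∫ ω, (1 - S ω) * Yh (X ω) ∂μ
      = (π * TPR + (1 - π) * FPR) - (π * SP * TPR + (1 - π) * SN * FPR) := by
    have heq : (fun ω => (1 - S ω) * Yh (X ω)) = fun ω => Z ω - S ω * Z ω := by
      funext ω
      simp only [hZdef]
      ring
    rw [heq, integral_sub hZint hSZint, hintZ, hintSZ]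
  -- conclusion
  have hden0' : π * SP + (1 - π) * SN ≠ 0 := ne_of_gt hden0
  have hden1' : 1 - π * SP - (1 - π) * SN ≠ 0 := by intro h; nlinarith
  constructor
  · rw [hTPRS, hintSZ, hintS]
    field_simp
    try ring
  · rw [hFPRS, hint1SZ, hint1S]
    have h2 : 1 - (π * SP + (1 - π) * SN) ≠ 0 := by intro h; nlinarith
    field_simp
    try ring
end

section
/- Let a, b, c, d be nonnegative reals with a + b = 1 and c + d = 1. Suppose TPR, FPR : [0,1] → [0,1] are continuously differentiable curves parametrized by a threshold, with TPR and FPR both decreasing from 1 to 0, and define TPR_SPU = a·TPR + b·FPR, FPR_SPU = c·TPR + d·FPR, AUC = ∫ TPR d(FPR), AUC_SPU = ∫ TPR_SPU d(FPR_SPU) (integrals over the full parametrization, oriented so FPR goes from 0 to 1). Then AUC_SPU = (b+c)/2 + (ad − bc)·AUC. -/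
open MeasureTheory intervalIntegral

theorem auc_spu_affine_in_auc
    (a b c d : ℝ) (ha : 0 ≤ a) (hb : 0 ≤ b) (hc : 0 ≤ c) (hd : 0 ≤ d)
    (hab : a + b = 1) (hcd : c + d = 1)
    (TPR FPR : ℝ → ℝ) (hT : ContDiff ℝ 1 TPR) (hF : ContDiff ℝ 1 FPR)
    (hT01 : ∀ t ∈ Set.Icc (0:ℝ) 1, TPR t ∈ Set.Icc (0:ℝ) 1)
    (hF01 : ∀ t ∈ Set.Icc (0:ℝ) 1, FPR t ∈ Set.Icc (0:ℝ) 1)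
    (hT0 : TPR 0 = 1) (hT1 : TPR 1 = 0) (hF0 : FPR 0 = 1) (hF1 : FPR 1 = 0)
    (hTanti : AntitoneOn TPR (Set.Icc 0 1)) (hFanti : AntitoneOn FPR (Set.Icc 0 1)) :
    (-∫ t in (0:ℝ)..1, (a * TPR t + b * FPR t) * deriv (fun u => c * TPR u + d * FPR u) t)
      = (b + c) / 2 + (a * d - b * c) * (-∫ t in (0:ℝ)..1, TPR t * deriv FPR t) := by
  have hTd : Differentiable ℝ TPR := hT.differentiable one_ne_zero
  have hFd : Differentiable ℝ FPR := hF.differentiable one_ne_zero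
  have hTc : Continuous TPR := hTd.continuous
  have hFc : Continuous FPR := hFd.continuous
  have hT'c : Continuous (deriv TPR) := hT.continuous_deriv le_rfl
  have hF'c : Continuous (deriv FPR) := hF.continuous_deriv le_rfl
  have iTT : IntervalIntegrable (fun t => TPR t * deriv TPR t) volume 0 1 :=
    (hTc.mul hT'c).intervalIntegrable _ _
  have iTF : IntervalIntegrable (fun t => TPR t * deriv FPR t) volume 0 1 :=
    (hTc.mul hF'c).intervalIntegrable _ _
  have iFT : IntervalIntegrable (fun t => FPR t * deriv TPR t) volume 0 1 :=
    (hFc.mul hT'c).intervalIntegrable _ _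
  have iFF : IntervalIntegrable (fun t => FPR t * deriv FPR t) volume 0 1 :=
    (hFc.mul hF'c).intervalIntegrable _ _
  have hTint : IntervalIntegrable (deriv TPR) volume 0 1 := hT'c.intervalIntegrable _ _
  have hFint : IntervalIntegrable (deriv FPR) volume 0 1 := hF'c.intervalIntegrable _ _
  have hThas : ∀ x ∈ Set.uIcc (0:ℝ) 1, HasDerivAt TPR (deriv TPR x) x :=
    fun x _ => (hTd x).hasDerivAt
  have hFhas : ∀ x ∈ Set.uIcc (0:ℝ) 1, HasDerivAt FPR (deriv FPR x) x :=
    fun x _ => (hFd x).hasDerivAt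
  set I1 := ∫ t in (0:ℝ)..1, TPR t * deriv TPR t with hI1
  set I2 := ∫ t in (0:ℝ)..1, TPR t * deriv FPR t with hI2
  set I3 := ∫ t in (0:ℝ)..1, FPR t * deriv TPR t with hI3
  set I4 := ∫ t in (0:ℝ)..1, FPR t * deriv FPR t with hI4
  have hTT := integral_deriv_mul_eq_sub (a := (0:ℝ)) (b := 1) hThas hThas hTint hTint
  have hFF := integral_deriv_mul_eq_sub (a := (0:ℝ)) (b := 1) hFhas hFhas hFint hFint
  have hTF := integral_deriv_mul_eq_sub (a := (0:ℝ)) (b := 1) hThas hFhas hTint hFint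
  rw [hT0, hT1] at hTT
  rw [hF0, hF1] at hFF
  rw [hT0, hT1, hF0, hF1] at hTF
  have hTTval : 2 * I1 = -1 := by
    have e : ∀ t : ℝ, deriv TPR t * TPR t + TPR t * deriv TPR t = 2 * (TPR t * deriv TPR t) :=
      fun t => by ring
    simp only [e] at hTT
    rw [intervalIntegral.integral_const_mul] at hTT
    norm_num at hTT; rw [hI1]; exact hTT
  have hFFval : 2 * I4 = -1 := by
    have e : ∀ t : ℝ, deriv FPR t * FPR t + FPR t * deriv FPR t = 2 * (FPR t * deriv FPR t) :=
      fun t => by ring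
    simp only [e] at hFF
    rw [intervalIntegral.integral_const_mul] at hFF
    norm_num at hFF; rw [hI4]; exact hFF
  have hTFval : I3 + I2 = -1 := by
    have e : ∀ t : ℝ, deriv TPR t * FPR t + TPR t * deriv FPR t
        = FPR t * deriv TPR t + TPR t * deriv FPR t := fun t => by ring
    simp only [e] at hTF
    rw [intervalIntegral.integral_add iFT iTF] at hTF
    norm_num at hTF; rw [hI3, hI2]; exact hTF
  have hderiv : ∀ t : ℝ, deriv (fun u => c * TPR u + d * FPR u) t
      = c * deriv TPR t + d * deriv FPR t := by
    intro t
    exact (((hTd t).hasDerivAt.const_mul c).add ((hFd t).hasDerivAt.const_mul d)).deriv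
  have key : (∫ t in (0:ℝ)..1,
      (a * TPR t + b * FPR t) * deriv (fun u => c * TPR u + d * FPR u) t)
      = a * c * I1 + a * d * I2 + b * c * I3 + b * d * I4 := by
    have e : ∀ t : ℝ, (a * TPR t + b * FPR t) * deriv (fun u => c * TPR u + d * FPR u) t
        = a * c * (TPR t * deriv TPR t) + a * d * (TPR t * deriv FPR t)
          + b * c * (FPR t * deriv TPR t) + b * d * (FPR t * deriv FPR t) := by
      intro t; rw [hderiv t]; ring
    simp only [e]
    rw [intervalIntegral.integral_add (((iTT.const_mul _).add (iTF.const_mul _)).add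
        (iFT.const_mul _)) (iFF.const_mul _),
      intervalIntegral.integral_add ((iTT.const_mul _).add (iTF.const_mul _)) (iFT.const_mul _),
      intervalIntegral.integral_add (iTT.const_mul _) (iTF.const_mul _),
      intervalIntegral.integral_const_mul, intervalIntegral.integral_const_mul,
      intervalIntegral.integral_const_mul, intervalIntegral.integral_const_mul]
  have h1 : I1 = -1/2 := by linarith
  have h4 : I4 = -1/2 := by linarith
  have h3 : I3 = -1 - I2 := by linarith
  rw [key, h1, h4, h3]
  show -(a * c * (-1/2) + a * d * I2 + b * c * (-1 - I2) + b * d * (-1/2))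
      = (b + c) / 2 + (a * d - b * c) * (-I2)
  linear_combination (c / 2) * hab + (b / 2) * hcd
end

section
/- Suppose S and X are conditionally independent given Y ∈ {0,1}, with S_P = E[S|Y=1], S_N = E[S|Y=0]. Then almost surely E[S | X] = (S_P − S_N)·P(Y=1 | X) + S_N. In particular, if S_P > S_N, there is a strictly increasing affine function h with E[S|X] = h(P(Y=1|X)). -/
open MeasureTheory ProbabilityTheory Set

private lemma comap_const_on' {Ω : Type*} [MeasurableSpace Ω] {Y : Ω → ℝ} {h : Ω → ℝ}
    (hh : StronglyMeasurable[MeasurableSpace.comap Y (inferInstance : MeasurableSpace ℝ)] h)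
    {ω ω' : Ω} (hYe : Y ω = Y ω') : h ω = h ω' := by
  obtain ⟨B, hB, hBeq⟩ := hh.measurable (measurableSet_singleton (h ω))
  have hω : ω ∈ Y ⁻¹' B := by rw [hBeq]; exact rfl
  have hω' : ω' ∈ Y ⁻¹' B := by
    simp only [Set.mem_preimage] at hω ⊢; rwa [← hYe]
  rw [hBeq] at hω'
  exact hω'.symm

private theorem aux_main
    {Ω : Type*} [mΩ : MeasurableSpace Ω] [StandardBorelSpace Ω] [Nonempty Ω]
    (μ : Measure Ω) [IsProbabilityMeasure μ] {d : ℕ}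
    (X : Ω → (Fin d → ℝ)) (Y S : Ω → ℝ)
    (hX : Measurable X) (hY : Measurable Y) (hS : Measurable S)
    (hYb : ∀ ω, Y ω = 0 ∨ Y ω = 1) (hS01 : ∀ ω, S ω ∈ Set.Icc (0:ℝ) 1)
    (hm : MeasurableSpace.comap Y inferInstance ≤ mΩ)
    (hCI : CondIndepFun (MeasurableSpace.comap Y inferInstance) hm S X μ)
    (hπ : 0 < μ {ω | Y ω = 1}) (hπ1 : μ {ω | Y ω = 1} < 1)
    (SP SN : ℝ)
    (hSP : SP = (∫ ω in {ω | Y ω = 1}, S ω ∂μ) / (μ {ω | Y ω = 1}).toReal)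
    (hSN : SN = (∫ ω in {ω | Y ω = 0}, S ω ∂μ) / (μ {ω | Y ω = 0}).toReal) :
    (μ[S|MeasurableSpace.comap X inferInstance] =ᵐ[μ]
      fun ω => (SP - SN) * ((μ[Y|MeasurableSpace.comap X inferInstance]) ω) + SN) := by
  have hmX : MeasurableSpace.comap X inferInstance ≤ mΩ := hX.comap_le
  have hA1mY : MeasurableSet[MeasurableSpace.comap Y inferInstance] {ω | Y ω = 1} :=
    ⟨{1}, measurableSet_singleton 1, rfl⟩
  have hA0mY : MeasurableSet[MeasurableSpace.comap Y inferInstance] {ω | Y ω = 0} :=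
    ⟨{0}, measurableSet_singleton 0, rfl⟩
  have hA1m : MeasurableSet {ω | Y ω = 1} := hm _ hA1mY
  have hA0m : MeasurableSet {ω | Y ω = 0} := hm _ hA0mY
  have hA0c : {ω | Y ω = 0} = {ω | Y ω = 1}ᶜ := by
    ext ω
    rcases hYb ω with h0 | h1
    · simp [h0]
    · simp [h1]
  have hA1ne : μ {ω | Y ω = 1} ≠ 0 := hπ.ne'
  have hA0ne : μ {ω | Y ω = 0} ≠ 0 := by
    rw [hA0c, prob_compl_eq_one_sub hA1m]
    exact fun h => absurd (tsub_eq_zero_iff_le.mp h) (not_le.mpr hπ1)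
  -- integrability
  have hSint : Integrable S μ := by
    refine (integrable_const (1:ℝ)).mono' hS.aestronglyMeasurable (ae_of_all _ fun ω => ?_)
    rcases hS01 ω with ⟨h0, h1⟩
    rw [Real.norm_eq_abs, abs_le]; exact ⟨by linarith, h1⟩
  have hYint : Integrable Y μ := by
    refine (integrable_const (1:ℝ)).mono' hY.aestronglyMeasurable (ae_of_all _ fun ω => ?_)
    rcases hYb ω with h | h <;> simp [h]
  -- integral of conditional probabilities over mY-measurable sets
  have int_ce : ∀ t : Set Ω, MeasurableSet t →
      ∀ A : Set Ω, MeasurableSet[MeasurableSpace.comap Y inferInstance] A →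
      ∫ ω in A, (μ⟦t|MeasurableSpace.comap Y inferInstance⟧) ω ∂μ = (μ (t ∩ A)).toReal := by
    intro t ht A hA
    rw [setIntegral_condExp hm ((integrable_const (1:ℝ)).indicator ht) hA,
      setIntegral_indicator ht, setIntegral_const, smul_eq_mul, mul_one, Set.inter_comm, measureReal_def]
  -- constancy of mY-measurable functions on atoms
  have hconst : ∀ (h : Ω → ℝ),
      StronglyMeasurable[MeasurableSpace.comap Y inferInstance] h →
      ∀ ω ω', Y ω = Y ω' → h ω = h ω' := fun h hh ω ω' he => comap_const_on' hh he
  -- key lemma: conditional average over atoms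
  have key : ∀ A : Set Ω, MeasurableSet[MeasurableSpace.comap Y inferInstance] A →
      (∀ ω ∈ A, ∀ ω' ∈ A, Y ω = Y ω') → μ A ≠ 0 →
      ∀ t2 : Set Ω, MeasurableSet[MeasurableSpace.comap X inferInstance] t2 →
      ∫ ω in t2 ∩ A, S ω ∂μ
        = ((∫ ω in A, S ω ∂μ) / (μ A).toReal) * (μ (t2 ∩ A)).toReal := by
    intro A hAmY hAatom hAne t2 ht2mX
    have hAm : MeasurableSet A := hm _ hAmY
    have ht2m : MeasurableSet t2 := hmX _ ht2mX
    have hμAfin : μ A ≠ ⊤ := measure_ne_top μ A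
    have hμAtR : (μ A).toReal ≠ 0 := ENNReal.toReal_ne_zero.mpr ⟨hAne, hμAfin⟩
    obtain ⟨ω₀, hω₀⟩ := nonempty_of_measure_ne_zero hAne
    have hprod := (condIndepFun_iff (MeasurableSpace.comap Y inferInstance) hm S X hS hX μ).mp hCI
    -- value of a conditional probability over the atom A
    have hval : ∀ t : Set Ω, MeasurableSet t →
        ((μ⟦t|MeasurableSpace.comap Y inferInstance⟧) ω₀) * (μ A).toReal
          = (μ (t ∩ A)).toReal := by
      intro t ht
      rw [← int_ce t ht A hAmY]
      rw [setIntegral_congr_fun hAm (fun ω hω =>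
        (hconst _ stronglyMeasurable_condExp ω ω₀ (hAatom ω hω ω₀ hω₀) :
          (μ⟦t|MeasurableSpace.comap Y inferInstance⟧) ω
            = (μ⟦t|MeasurableSpace.comap Y inferInstance⟧) ω₀))]
      rw [setIntegral_const, smul_eq_mul, mul_comm, measureReal_def]
    -- the factorization identity on measures of rectangles intersected with A
    have hmeas_id : ∀ C : Set ℝ, MeasurableSet C →
        (μ (S ⁻¹' C ∩ t2 ∩ A)).toReal * (μ A).toReal
          = (μ (S ⁻¹' C ∩ A)).toReal * (μ (t2 ∩ A)).toReal := by
      intro C hC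
      have ht1S : MeasurableSet[MeasurableSpace.comap S inferInstance] (S ⁻¹' C) :=
        ⟨C, hC, rfl⟩
      have ht2X : MeasurableSet[MeasurableSpace.comap X inferInstance] t2 := ht2mX
      have hp := hprod (S ⁻¹' C) t2 ht1S ht2X
      have h12 : (μ ((S ⁻¹' C ∩ t2) ∩ A)).toReal
          = ∫ ω in A, ((μ⟦S ⁻¹' C|MeasurableSpace.comap Y inferInstance⟧)
              * (μ⟦t2|MeasurableSpace.comap Y inferInstance⟧)) ω ∂μ := by
        rw [← int_ce (S ⁻¹' C ∩ t2) ((hS hC).inter ht2m) A hAmY]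
        exact setIntegral_congr_ae hAm (hp.mono fun ω h _ => h)
      have h12' : ∫ ω in A, ((μ⟦S ⁻¹' C|MeasurableSpace.comap Y inferInstance⟧)
              * (μ⟦t2|MeasurableSpace.comap Y inferInstance⟧)) ω ∂μ
          = (((μ⟦S ⁻¹' C|MeasurableSpace.comap Y inferInstance⟧) ω₀)
              * ((μ⟦t2|MeasurableSpace.comap Y inferInstance⟧) ω₀)) * (μ A).toReal := by
        rw [setIntegral_congr_fun hAm (fun ω hω => ?_), setIntegral_const, smul_eq_mul, mul_comm, measureReal_def]
        have e1 := hconst _ (stronglyMeasurable_condExp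
          (μ := μ) (f := (S ⁻¹' C).indicator (fun _ => (1:ℝ)))
          (m := MeasurableSpace.comap Y inferInstance)) ω ω₀ (hAatom ω hω ω₀ hω₀)
        have e2 := hconst _ (stronglyMeasurable_condExp
          (μ := μ) (f := t2.indicator (fun _ => (1:ℝ)))
          (m := MeasurableSpace.comap Y inferInstance)) ω ω₀ (hAatom ω hω ω₀ hω₀)
        simp only [Pi.mul_apply, e1, e2]
      have hv1 := hval (S ⁻¹' C) (hS hC)
      have hv2 := hval t2 ht2m
      rw [h12, h12', ← hv1, ← hv2]
      ring
    -- pushforward measure factorization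
    have hmap : Measure.map S (μ.restrict (t2 ∩ A))
        = (μ (t2 ∩ A) / μ A) • Measure.map S (μ.restrict A) := by
      ext C hC
      rw [Measure.smul_apply, Measure.map_apply hS hC, Measure.map_apply hS hC,
        Measure.restrict_apply (hS hC), Measure.restrict_apply (hS hC), smul_eq_mul]
      have hfin1 : μ (S ⁻¹' C ∩ (t2 ∩ A)) ≠ ⊤ := measure_ne_top _ _
      have hfin2 : μ (t2 ∩ A) / μ A * μ (S ⁻¹' C ∩ A) ≠ ⊤ :=
        ENNReal.mul_ne_top ((ENNReal.div_lt_top (measure_ne_top _ _) hAne).ne) (measure_ne_top _ _)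
      rw [← ENNReal.toReal_eq_toReal_iff' hfin1 hfin2, ENNReal.toReal_mul, ENNReal.toReal_div,
        ← Set.inter_assoc, div_mul_eq_mul_div, eq_div_iff hμAtR]
      linear_combination hmeas_id C hC
    calc ∫ ω in t2 ∩ A, S ω ∂μ
        = ∫ x, x ∂(Measure.map S (μ.restrict (t2 ∩ A))) := by
          rw [integral_map (f := fun x : ℝ => x) hS.aemeasurable measurable_id.aestronglyMeasurable]
      _ = (μ (t2 ∩ A) / μ A).toReal * ∫ x, x ∂(Measure.map S (μ.restrict A)) := by
          rw [hmap, integral_smul_measure, smul_eq_mul]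
      _ = (μ (t2 ∩ A)).toReal / (μ A).toReal * ∫ ω in A, S ω ∂μ := by
          rw [integral_map (f := fun x : ℝ => x) hS.aemeasurable measurable_id.aestronglyMeasurable, ENNReal.toReal_div]
      _ = ((∫ ω in A, S ω ∂μ) / (μ A).toReal) * (μ (t2 ∩ A)).toReal := by ring
  -- split integrals over the Y-atoms
  have hsplit : ∀ t2 : Set Ω, MeasurableSet t2 → ∀ f : Ω → ℝ, Integrable f μ →
      ∫ ω in t2, f ω ∂μ
        = ∫ ω in t2 ∩ {ω | Y ω = 1}, f ω ∂μ + ∫ ω in t2 ∩ {ω | Y ω = 0}, f ω ∂μ := by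
    intro t2 ht2 f hf
    rw [hA0c]
    conv_lhs => rw [← Set.inter_union_compl t2 {ω | Y ω = 1}]
    exact setIntegral_union (disjoint_compl_right.mono inter_subset_right inter_subset_right)
      (ht2.inter hA1m.compl) hf.integrableOn hf.integrableOn
  have hatom1 : ∀ ω ∈ {ω | Y ω = 1}, ∀ ω' ∈ {ω | Y ω = 1}, Y ω = Y ω' := by
    intro ω hω ω' hω'
    simp only [Set.mem_setOf_eq] at hω hω'; rw [hω, hω']
  have hatom0 : ∀ ω ∈ {ω | Y ω = 0}, ∀ ω' ∈ {ω | Y ω = 0}, Y ω = Y ω' := by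
    intro ω hω ω' hω'
    simp only [Set.mem_setOf_eq] at hω hω'; rw [hω, hω']
  have hkey_int : ∀ t2 : Set Ω, MeasurableSet[MeasurableSpace.comap X inferInstance] t2 →
      ∫ ω in t2, S ω ∂μ = ∫ ω in t2, ((SP - SN) * Y ω + SN) ∂μ := by
    intro t2 ht2
    have ht2m : MeasurableSet t2 := hmX _ ht2
    have hgint : Integrable (fun ω => (SP - SN) * Y ω + SN) μ :=
      (hYint.const_mul (SP - SN)).add (integrable_const SN)
    rw [hsplit t2 ht2m S hSint, hsplit t2 ht2m _ hgint]
    rw [key _ hA1mY hatom1 hA1ne t2 ht2, key _ hA0mY hatom0 hA0ne t2 ht2, ← hSP, ← hSN]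
    have g1 : ∫ ω in t2 ∩ {ω | Y ω = 1}, ((SP - SN) * Y ω + SN) ∂μ
        = SP * (μ (t2 ∩ {ω | Y ω = 1})).toReal := by
      rw [setIntegral_congr_fun (g := fun _ => SP) (ht2m.inter hA1m)
        (fun ω hω => by
          have h1 : Y ω = 1 := hω.2
          show (SP - SN) * Y ω + SN = SP
          rw [h1]; ring)]
      rw [setIntegral_const, smul_eq_mul, mul_comm]
      rfl
    have g0 : ∫ ω in t2 ∩ {ω | Y ω = 0}, ((SP - SN) * Y ω + SN) ∂μ
        = SN * (μ (t2 ∩ {ω | Y ω = 0})).toReal := by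
      rw [setIntegral_congr_fun (g := fun _ => SN) (ht2m.inter hA0m)
        (fun ω hω => by
          have h1 : Y ω = 0 := hω.2
          show (SP - SN) * Y ω + SN = SN
          rw [h1]; ring)]
      rw [setIntegral_const, smul_eq_mul, mul_comm]
      rfl
    rw [g1, g0]
  have hgint : Integrable (fun ω => (SP - SN) * Y ω + SN) μ :=
    (hYint.const_mul (SP - SN)).add (integrable_const SN)
  have h2 : (μ[(fun ω => (SP - SN) * Y ω + SN)|MeasurableSpace.comap X inferInstance]) =ᵐ[μ]
      μ[S|MeasurableSpace.comap X inferInstance] := by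
    refine ae_eq_condExp_of_forall_setIntegral_eq hmX hSint
      (fun s hs hμs => integrable_condExp.integrableOn)
      (fun s hs hμs => ?_) stronglyMeasurable_condExp.aestronglyMeasurable
    rw [setIntegral_condExp hmX hgint hs]
    exact (hkey_int s hs).symm
  have h3 : (μ[(fun ω => (SP - SN) * Y ω + SN)|MeasurableSpace.comap X inferInstance]) =ᵐ[μ]
      fun ω => (SP - SN) * ((μ[Y|MeasurableSpace.comap X inferInstance]) ω) + SN := by
    have e1 : (fun ω => (SP - SN) * Y ω + SN)
        = ((SP - SN) • Y + fun _ : Ω => SN) := by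
      funext ω; simp [smul_eq_mul]
    rw [e1]
    refine (condExp_add (hYint.smul (SP - SN)) (integrable_const SN) _).trans ?_
    have h4 := condExp_smul (μ := μ) (m := MeasurableSpace.comap X inferInstance) (SP - SN) Y
    rw [condExp_const hmX SN]
    filter_upwards [h4] with ω hω
    simp only [Pi.add_apply, Pi.smul_apply, smul_eq_mul] at hω ⊢
    rw [hω]
  exact h2.symm.trans h3


theorem condexp_soft_label_affine_in_posterior
    {Ω : Type*} [MeasurableSpace Ω] [StandardBorelSpace Ω] [Nonempty Ω]
    (μ : Measure Ω) [IsProbabilityMeasure μ] {d : ℕ}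
    (X : Ω → (Fin d → ℝ)) (Y S : Ω → ℝ)
    (hX : Measurable X) (hY : Measurable Y) (hS : Measurable S)
    (hYb : ∀ ω, Y ω = 0 ∨ Y ω = 1) (hS01 : ∀ ω, S ω ∈ Set.Icc (0:ℝ) 1)
    (hm : MeasurableSpace.comap Y inferInstance ≤ ‹MeasurableSpace Ω›)
    (hCI : CondIndepFun (MeasurableSpace.comap Y inferInstance) hm S X μ)
    (hπ : 0 < μ {ω | Y ω = 1}) (hπ1 : μ {ω | Y ω = 1} < 1)
    (SP SN : ℝ)
    (hSP : SP = (∫ ω in {ω | Y ω = 1}, S ω ∂μ) / (μ {ω | Y ω = 1}).toReal)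
    (hSN : SN = (∫ ω in {ω | Y ω = 0}, S ω ∂μ) / (μ {ω | Y ω = 0}).toReal) :
    (μ[S|MeasurableSpace.comap X inferInstance] =ᵐ[μ]
      fun ω => (SP - SN) * ((μ[Y|MeasurableSpace.comap X inferInstance]) ω) + SN) ∧
    (SN < SP → ∃ h : ℝ → ℝ, StrictMono h ∧ (∀ t, h t = (SP - SN) * t + SN) ∧
      μ[S|MeasurableSpace.comap X inferInstance] =ᵐ[μ]
        fun ω => h ((μ[Y|MeasurableSpace.comap X inferInstance]) ω)) := by
  have hmain := aux_main μ X Y S hX hY hS hYb hS01 hm hCI hπ hπ1 SP SN hSP hSN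
  refine ⟨hmain, fun hlt => ⟨fun t => (SP - SN) * t + SN, ?_, fun t => rfl, hmain⟩⟩
  intro a b hab
  have hpos : 0 < SP - SN := sub_pos.mpr hlt
  dsimp only
  nlinarith
end

section
/- Let (X,Y) have joint law with η(x) = P(Y=1|X=x), density f for X, π = P(Y=1) > 0, and let η_S satisfy |η_S(x) − h(η(x))| ≤ ε for a differentiable strictly increasing h with h' ≥ C_h > 0. Assume the slice condition ∫_{η(x)∈[a,b]} f(x)dx ≤ M(b−a) for all 0<a<b<1. For thresholds T_Y and T_S with P(η(X) > T_Y) = P(η_S(X) > T_S), the classifiers Ŷ = 1{η(X)>T_Y} and Ŷ_S = 1{η_S(X)>T_S} satisfy TPR(Ŷ) − TPR(Ŷ_S) ≤ (4M/(πC_h²))·ε². -/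
open MeasureTheory Set

theorem tpr_deviation_bound_noisy_monotone
    {Ω : Type*} [MeasurableSpace Ω] (μ : Measure Ω) [IsProbabilityMeasure μ]
    {d : ℕ} (X : Ω → (Fin d → ℝ)) (Y : Ω → ℝ)
    (η ηS : (Fin d → ℝ) → ℝ) (h : ℝ → ℝ) (Ch ε M : ℝ)
    (hX : Measurable X) (hY : Measurable Y) (hη : Measurable η) (hηS : Measurable ηS)
    (hYb : ∀ ω, Y ω = 0 ∨ Y ω = 1)
    (hη01 : ∀ x, η x ∈ Set.Icc (0:ℝ) 1) (hηS01 : ∀ x, ηS x ∈ Set.Icc (0:ℝ) 1)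
    (hcond : μ[Y|MeasurableSpace.comap X inferInstance] =ᵐ[μ] fun ω => η (X ω))
    (π : ℝ) (hπdef : π = (μ {ω | Y ω = 1}).toReal) (hπ0 : 0 < π) (hπ1 : π < 1)
    (hCh : 0 < Ch) (hε : 0 < ε) (hM : 0 < M)
    (hdiff : DifferentiableOn ℝ h (Set.Icc (0:ℝ) 1))
    (hderiv : ∀ t ∈ Set.Icc (0:ℝ) 1, Ch ≤ derivWithin h (Set.Icc (0:ℝ) 1) t)
    (hmono : StrictMonoOn h (Set.Icc (0:ℝ) 1))
    (hnoise : ∀ x, |ηS x - h (η x)| ≤ ε)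
    (hslice : ∀ a b : ℝ, 0 < a → a < b → b < 1 →
      μ {ω | η (X ω) ∈ Set.Icc a b} ≤ ENNReal.ofReal (M * (b - a)))
    (TY TS : ℝ) (hTY0 : 0 < TY) (hTY1 : TY + 2 * ε / Ch < 1)
    (hmatch : μ {ω | TY < η (X ω)} = μ {ω | TS < ηS (X ω)}) :
    (μ ({ω | TY < η (X ω)} ∩ {ω | Y ω = 1})).toReal / π -
      (μ ({ω | TS < ηS (X ω)} ∩ {ω | Y ω = 1})).toReal / π
      ≤ (4 * M / (π * Ch ^ 2)) * ε ^ 2 := by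
  classical
  have hm : MeasurableSpace.comap X inferInstance ≤ ‹MeasurableSpace Ω› := hX.comap_le
  set g : Ω → ℝ := fun ω => η (X ω) with hg_def
  have hgmeas : Measurable g := hη.comp hX
  set A : Set Ω := {ω | TY < η (X ω)} with hA_def
  set B : Set Ω := {ω | TS < ηS (X ω)} with hB_def
  set S : Set Ω := {ω | Y ω = 1} with hS_def
  have hA : MeasurableSet A := measurableSet_lt measurable_const hgmeas
  have hB : MeasurableSet B := measurableSet_lt measurable_const (hηS.comp hX)
  have hS : MeasurableSet S := hY (measurableSet_singleton 1)
  have hAm : MeasurableSet[MeasurableSpace.comap X inferInstance] A :=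
    ⟨{x | TY < η x}, measurableSet_lt measurable_const hη, rfl⟩
  have hBm : MeasurableSet[MeasurableSpace.comap X inferInstance] B :=
    ⟨{x | TS < ηS x}, measurableSet_lt measurable_const hηS, rfl⟩
  have hYind : ∀ ω, Y ω = S.indicator (fun _ => (1:ℝ)) ω := by
    intro ω
    rcases hYb ω with h0 | h1
    · have : ω ∉ S := by simp [hS_def, h0]
      simp [Set.indicator_of_notMem this, h0]
    · have : ω ∈ S := by simp [hS_def, h1]
      simp [Set.indicator_of_mem this, h1]
  have hYint : Integrable Y μ := by
    have : Integrable (S.indicator (fun _ => (1:ℝ))) μ :=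
      (integrable_const (1:ℝ)).indicator hS
    exact this.congr (by filter_upwards with ω using (hYind ω).symm)
  have hgint : Integrable g μ := by
    refine (integrable_const (1:ℝ)).mono' hgmeas.aestronglyMeasurable ?_
    filter_upwards with ω
    have h1 := (hη01 (X ω)).1
    have h2 := (hη01 (X ω)).2
    rw [Real.norm_eq_abs, abs_le]
    constructor <;> simp [hg_def] <;> linarith
  -- key identity via conditional expectation
  have key : ∀ s : Set Ω, MeasurableSet[MeasurableSpace.comap X inferInstance] s →
      (μ (s ∩ S)).toReal = ∫ ω in s, g ω ∂μ := by
    intro s hs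
    have hs' : MeasurableSet s := hm s hs
    have h1 : ∫ ω in s, (μ[Y|MeasurableSpace.comap X inferInstance]) ω ∂μ = ∫ ω in s, g ω ∂μ :=
      setIntegral_congr_ae hs' (hcond.mono fun ω hω _ => hω)
    have h2 : ∫ ω in s, (μ[Y|MeasurableSpace.comap X inferInstance]) ω ∂μ = ∫ ω in s, Y ω ∂μ :=
      setIntegral_condExp hm hYint hs
    have h3 : ∫ ω in s, Y ω ∂μ = ∫ ω in s, S.indicator (fun _ => (1:ℝ)) ω ∂μ :=
      setIntegral_congr_ae hs' (Filter.Eventually.of_forall fun ω _ => hYind ω)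
    rw [← h1, h2, h3, setIntegral_indicator hS, setIntegral_const]
    simp; rfl
  -- measure equality of the two difference sets
  have hmeq : μ (B \ A) = μ (A \ B) := by
    have h1 : μ (A ∩ B) + μ (A \ B) = μ A := measure_inter_add_diff A hB
    have h2 : μ (B ∩ A) + μ (B \ A) = μ B := measure_inter_add_diff B hA
    rw [Set.inter_comm] at h2
    rw [hmatch] at h1
    have h3 : μ (A ∩ B) + μ (A \ B) = μ (A ∩ B) + μ (B \ A) := by rw [h1, h2]
    exact (ENNReal.add_right_inj (measure_ne_top μ _)).mp h3 |>.symm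
  have hmeqR : (μ (B \ A)).toReal = (μ (A \ B)).toReal := by rw [hmeq]
  -- split the integrals
  have hsplitA : ∫ ω in A, g ω ∂μ
      = ∫ ω in A \ B, g ω ∂μ + ∫ ω in A ∩ B, g ω ∂μ := by
    conv_lhs => rw [← Set.diff_union_inter A B]
    exact setIntegral_union Set.disjoint_sdiff_inter (hA.inter hB)
      hgint.integrableOn hgint.integrableOn
  have hsplitB : ∫ ω in B, g ω ∂μ
      = ∫ ω in B \ A, g ω ∂μ + ∫ ω in A ∩ B, g ω ∂μ := by
    conv_lhs => rw [← Set.diff_union_inter B A]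
    rw [setIntegral_union Set.disjoint_sdiff_inter (hB.inter hA)
      hgint.integrableOn hgint.integrableOn, Set.inter_comm B A]
  -- main bound on the difference of the two side integrals
  have hεCh : (0:ℝ) < 2 * ε / Ch := by positivity
  have hD : ∫ ω in A \ B, g ω ∂μ - ∫ ω in B \ A, g ω ∂μ
      ≤ 4 * M * ε ^ 2 / Ch ^ 2 := by
    have hRHS0 : (0:ℝ) ≤ 4 * M * ε ^ 2 / Ch ^ 2 := by positivity
    rcases Set.eq_empty_or_nonempty (A \ B) with hABe | ⟨ω₀, hω₀⟩
    · have h0 : ∫ ω in A \ B, g ω ∂μ = 0 := by rw [hABe]; exact setIntegral_empty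
      have h1 : 0 ≤ ∫ ω in B \ A, g ω ∂μ :=
        setIntegral_nonneg (hB.diff hA) fun ω _ => (hη01 (X ω)).1
      linarith
    rcases Set.eq_empty_or_nonempty (B \ A) with hBAe | ⟨ω₁, hω₁⟩
    · have hz : μ (A \ B) = 0 := by rw [← hmeq, hBAe]; simp
      have h0 : ∫ ω in A \ B, g ω ∂μ = 0 := by
        rw [Measure.restrict_eq_zero.mpr hz]; exact integral_zero_measure _
      have h1 : ∫ ω in B \ A, g ω ∂μ = 0 := by rw [hBAe]; exact setIntegral_empty
      linarith
    -- both nonempty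
    have hgap : ∀ ω ∈ A \ B, ∀ ω' ∈ B \ A, g ω ≤ g ω' + 2 * ε / Ch := by
      intro ω hω ω' hω'
      have hv01 := hη01 (X ω)
      have hu01 := hη01 (X ω')
      have hnB : ¬ TS < ηS (X ω) := hω.2
      have hB' : TS < ηS (X ω') := hω'.1
      have hn1 := abs_le.mp (hnoise (X ω))
      have hn2 := abs_le.mp (hnoise (X ω'))
      have h1 : h (g ω) ≤ TS + ε := by
        have : ηS (X ω) ≤ TS := not_lt.mp hnB
        simp only [hg_def]; linarith [hn1.1]
      have h2 : TS - ε ≤ h (g ω') := by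
        simp only [hg_def]; linarith [hn2.2]
      rcases le_or_gt (g ω) (g ω') with hle | hlt
      · linarith
      · have hint : DifferentiableOn ℝ h (interior (Set.Icc (0:ℝ) 1)) :=
          hdiff.mono interior_subset
        have hbd : ∀ x ∈ interior (Set.Icc (0:ℝ) 1), Ch ≤ deriv h x := by
          intro x hx
          rw [interior_Icc] at hx
          have hnb : Set.Icc (0:ℝ) 1 ∈ nhds x := Icc_mem_nhds hx.1 hx.2
          rw [← derivWithin_of_mem_nhds hnb]
          exact hderiv x (Set.Ioo_subset_Icc_self hx)
        have hmvt : Ch * (g ω - g ω') ≤ h (g ω) - h (g ω') :=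
          (convex_Icc 0 1).mul_sub_le_image_sub_of_le_deriv hdiff.continuousOn
            hint hbd (g ω') hu01 (g ω) hv01 hlt.le
        have h4 : Ch * (g ω - g ω') ≤ 2 * ε := by linarith
        have h5 : g ω - g ω' ≤ 2 * ε / Ch := by
          rw [le_div_iff₀ hCh]
          linarith [mul_comm Ch (g ω - g ω')]
        linarith
    set t₁ : ℝ := sInf (g '' (B \ A)) with ht₁
    have hne : (g '' (B \ A)).Nonempty := ⟨g ω₁, Set.mem_image_of_mem _ hω₁⟩
    have hbdd : BddBelow (g '' (B \ A)) := by
      refine ⟨0, ?_⟩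
      rintro y ⟨ω, _, rfl⟩
      exact (hη01 (X ω)).1
    have ht1_le : ∀ ω' ∈ B \ A, t₁ ≤ g ω' := fun ω' h' =>
      csInf_le hbdd (Set.mem_image_of_mem _ h')
    have ht1_ge : ∀ ω ∈ A \ B, g ω ≤ t₁ + 2 * ε / Ch := by
      intro ω hω
      have hlow : g ω - 2 * ε / Ch ≤ t₁ := by
        refine le_csInf hne ?_
        rintro y ⟨ω', h', rfl⟩
        linarith [hgap ω hω ω' h']
      linarith
    -- slice bound
    have hω₁TY : g ω₁ ≤ TY := not_lt.mp hω₁.2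
    have hsub : A \ B ⊆ {ω | η (X ω) ∈ Set.Icc TY (TY + 2 * ε / Ch)} := by
      intro ω hω
      have hA' : TY < g ω := hω.1
      have h1 := ht1_ge ω hω
      have h2 := ht1_le ω₁ hω₁
      constructor
      · exact le_of_lt hA'
      · simp only [hg_def] at h1 h2 ⊢; linarith
    have hμm : μ (A \ B) ≤ ENNReal.ofReal (M * (TY + 2 * ε / Ch - TY)) :=
      le_trans (measure_mono hsub)
        (hslice TY (TY + 2 * ε / Ch) hTY0 (by linarith) hTY1)
    have hmR : (μ (A \ B)).toReal ≤ M * (2 * ε / Ch) := by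
      have := ENNReal.toReal_le_of_le_ofReal
        (by have he : TY + 2 * ε / Ch - TY = 2 * ε / Ch := by ring
            rw [he]; positivity) hμm
      calc (μ (A \ B)).toReal ≤ M * (TY + 2 * ε / Ch - TY) := this
        _ = M * (2 * ε / Ch) := by ring
    have hm0 : (0:ℝ) ≤ (μ (A \ B)).toReal := ENNReal.toReal_nonneg
    -- integral bounds
    have hI1 : ∫ ω in A \ B, g ω ∂μ ≤ (t₁ + 2 * ε / Ch) * (μ (A \ B)).toReal := by
      have hle : ∫ ω in A \ B, g ω ∂μ ≤ ∫ _ω in A \ B, (t₁ + 2 * ε / Ch) ∂μ :=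
        setIntegral_mono_on hgint.integrableOn
          (integrable_const _).integrableOn (hA.diff hB) ht1_ge
      rw [setIntegral_const, smul_eq_mul, measureReal_def] at hle
      linarith [hle, mul_comm (μ (A \ B)).toReal (t₁ + 2 * ε / Ch)]
    have hI2 : t₁ * (μ (B \ A)).toReal ≤ ∫ ω in B \ A, g ω ∂μ := by
      have hle : ∫ _ω in B \ A, t₁ ∂μ ≤ ∫ ω in B \ A, g ω ∂μ :=
        setIntegral_mono_on (integrable_const _).integrableOn
          hgint.integrableOn (hB.diff hA) ht1_le
      rw [setIntegral_const, smul_eq_mul, measureReal_def] at hle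
      linarith [hle, mul_comm (μ (B \ A)).toReal t₁]
    have hstep : ∫ ω in A \ B, g ω ∂μ - ∫ ω in B \ A, g ω ∂μ
        ≤ (2 * ε / Ch) * (μ (A \ B)).toReal := by
      rw [hmeqR] at hI2
      nlinarith [hI1, hI2]
    calc ∫ ω in A \ B, g ω ∂μ - ∫ ω in B \ A, g ω ∂μ
        ≤ (2 * ε / Ch) * (μ (A \ B)).toReal := hstep
      _ ≤ (2 * ε / Ch) * (M * (2 * ε / Ch)) := by
          exact mul_le_mul_of_nonneg_left hmR hεCh.le
      _ = 4 * M * ε ^ 2 / Ch ^ 2 := by field_simp; ring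
  -- conclude
  have haR : (μ (A ∩ S)).toReal = ∫ ω in A, g ω ∂μ := key A hAm
  have hbR : (μ (B ∩ S)).toReal = ∫ ω in B, g ω ∂μ := key B hBm
  have hRHSeq : (4 * M / (π * Ch ^ 2)) * ε ^ 2 = (4 * M * ε ^ 2 / Ch ^ 2) / π := by
    field_simp
  rw [div_sub_div_same, haR, hbR, hsplitA, hsplitB, hRHSeq]
  have hnum : (∫ ω in A \ B, g ω ∂μ + ∫ ω in A ∩ B, g ω ∂μ)
      - (∫ ω in B \ A, g ω ∂μ + ∫ ω in A ∩ B, g ω ∂μ)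
      = ∫ ω in A \ B, g ω ∂μ - ∫ ω in B \ A, g ω ∂μ := by ring
  rw [hnum]
  gcongr
end

section
/- Let S ∈ [0,1] be a random variable with continuous cdf F_S and 0 < E[S] < 1, and for t ∈ [0,1] define G(t) = E[S·1{S > F_S^{-1}(1−t)}] (the largest possible value of E[S·Ŷ] over classifiers with P(Ŷ=1) = t). Then ∫₀¹ G(t) dt = 1/2 − (1/2)∫₀¹ F_S(u)² du. -/
open MeasureTheory Set

theorem integral_of_optimal_soft_capture
    {Ω : Type*} [MeasurableSpace Ω] (μ : Measure Ω) [IsProbabilityMeasure μ]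
    (S : Ω → ℝ) (hS : Measurable S) (hS01 : ∀ ω, S ω ∈ Set.Icc (0:ℝ) 1)
    (hES0 : 0 < ∫ ω, S ω ∂μ) (hES1 : (∫ ω, S ω ∂μ) < 1)
    (hcont : Continuous fun u : ℝ => (μ {ω | S ω ≤ u}).toReal)
    (Q : ℝ → ℝ)
    (hQ : ∀ t ∈ Set.Icc (0:ℝ) 1, μ {ω | Q (1 - t) < S ω} = ENNReal.ofReal t) :
    ∫ t in (0:ℝ)..1, (∫ ω, S ω * (if Q (1 - t) < S ω then (1:ℝ) else 0) ∂μ)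
      = 1 / 2 - (1 / 2) * ∫ u in (0:ℝ)..1, ((μ {ω | S ω ≤ u}).toReal) ^ 2 := by
  set F : ℝ → ℝ := fun u => (μ {ω | S ω ≤ u}).toReal with hFdef
  have hmeas : ∀ c : ℝ, MeasurableSet {ω | c < S ω} := fun c =>
    measurableSet_lt measurable_const hS
  have hmeasle : ∀ c : ℝ, MeasurableSet {ω | S ω ≤ c} := fun c =>
    measurableSet_le hS measurable_const
  have htail : ∀ s : ℝ, (μ {ω | s < S ω}).toReal = 1 - F s := by
    intro s
    have hcompl : {ω | s < S ω} = {ω | S ω ≤ s}ᶜ := by ext ω; simp [not_le]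
    rw [hcompl, measure_compl (hmeasle s) (measure_ne_top μ _), measure_univ,
      ENNReal.toReal_sub_of_le prob_le_one ENNReal.one_ne_top]
    simp [hFdef]
  have hF01 : ∀ u, F u ∈ Icc (0:ℝ) 1 := fun u =>
    ⟨ENNReal.toReal_nonneg, by
      simpa using ENNReal.toReal_mono ENNReal.one_ne_top (prob_le_one (μ := μ))⟩
  have hF1 : ∀ u : ℝ, 1 ≤ u → F u = 1 := by
    intro u hu
    have h : {ω | S ω ≤ u} = univ := eq_univ_of_forall fun ω => le_trans (hS01 ω).2 hu
    simp [hFdef, h]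
  have hFcont : Continuous F := hcont
  -- Step 1: inner integral equals ∫_0^1 min (1 - F u) t du
  have key : ∀ t ∈ Icc (0:ℝ) 1,
      (∫ ω, S ω * (if Q (1 - t) < S ω then (1:ℝ) else 0) ∂μ)
        = ∫ u in (0:ℝ)..1, min (1 - F u) t := by
    intro t ht
    set c := Q (1 - t) with hc
    have hfind : (fun ω => S ω * (if c < S ω then (1:ℝ) else 0))
        = ({ω | c < S ω}).indicator S := by
      ext ω; by_cases h : c < S ω <;> simp [Set.indicator, h]
    have hint : Integrable (({ω | c < S ω}).indicator S) μ := by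
      refine ⟨(hS.indicator (hmeas c)).aestronglyMeasurable, ?_⟩
      apply HasFiniteIntegral.of_bounded (C := 1)
      filter_upwards with ω
      by_cases h : ω ∈ {ω | c < S ω}
      · rw [Set.indicator_of_mem h, Real.norm_eq_abs, abs_le]
        exact ⟨by linarith [(hS01 ω).1], (hS01 ω).2⟩
      · simp [Set.indicator_of_notMem h]
    have hnn : 0 ≤ᵐ[μ] ({ω | c < S ω}).indicator S :=
      Filter.Eventually.of_forall fun ω => Set.indicator_nonneg (fun x _ => (hS01 x).1) ω
    rw [hfind, hint.integral_eq_integral_meas_lt hnn]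
    simp only [measureReal_def]
    have hQt : (μ {a | c < S a}).toReal = t := by
      rw [hc, hQ t ht]; exact ENNReal.toReal_ofReal ht.1
    have hpt : EqOn (fun s => (μ {a | s < ({ω | c < S ω}).indicator S a}).toReal)
        (fun s => min (1 - F s) t) (Ioi (0:ℝ)) := by
      intro s hs
      have hs0 : (0:ℝ) < s := hs
      have hset : {a | s < ({ω | c < S ω}).indicator S a}
          = {a | s < S a} ∩ {a | c < S a} := by
        ext a
        by_cases h : a ∈ {ω | c < S ω}
        · simp [Set.indicator_of_mem h, h.out]
        · simp only [Set.indicator_of_notMem h, mem_setOf_eq, mem_inter_iff]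
          constructor
          · intro hlt; exact absurd hlt (not_lt.mpr hs0.le)
          · intro ⟨_, hca⟩; exact absurd hca h
      simp only
      rw [hset]
      rcases le_total c s with h | h
      · have hsub : {a | s < S a} ⊆ {a | c < S a} := fun a ha => lt_of_le_of_lt h ha
        rw [inter_eq_left.mpr hsub, htail s, min_eq_left]
        rw [← hQt, ← htail s]
        exact ENNReal.toReal_mono (measure_ne_top μ _) (measure_mono hsub)
      · have hsub : {a | c < S a} ⊆ {a | s < S a} := fun a ha => lt_of_le_of_lt h ha
        rw [inter_eq_right.mpr hsub, hQt, min_eq_right]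
        rw [← hQt, ← htail s]
        exact ENNReal.toReal_mono (measure_ne_top μ _) (measure_mono hsub)
    rw [setIntegral_congr_fun measurableSet_Ioi hpt,
      intervalIntegral.integral_of_le zero_le_one]
    refine setIntegral_eq_of_subset_of_ae_diff_eq_zero
      measurableSet_Ioi.nullMeasurableSet Ioc_subset_Ioi_self ?_
    refine Filter.Eventually.of_forall fun s hsd => ?_
    have hs1 : (1:ℝ) ≤ s := by
      rcases hsd with ⟨hs0, hns⟩
      by_contra hlt
      exact hns ⟨hs0, le_of_not_ge hlt⟩
    show min (1 - F s) t = 0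
    rw [hF1 s hs1]
    simp [min_eq_left ht.1]
  -- Step 2: replace integrand
  rw [intervalIntegral.integral_congr (g := fun t => ∫ u in (0:ℝ)..1, min (1 - F u) t)
    (fun t ht => key t (by rwa [uIcc_of_le zero_le_one] at ht))]
  -- Step 3: Fubini swap
  have hcont2 : Continuous fun p : ℝ × ℝ => min (1 - F p.2) p.1 :=
    (continuous_const.sub (hFcont.comp continuous_snd)).min continuous_fst
  have hswap : (∫ t in (0:ℝ)..1, ∫ u in (0:ℝ)..1, min (1 - F u) t)
      = ∫ u in (0:ℝ)..1, ∫ t in (0:ℝ)..1, min (1 - F u) t := by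
    simp_rw [intervalIntegral.integral_of_le zero_le_one]
    rw [MeasureTheory.integral_integral_swap]
    rw [Measure.prod_restrict]
    exact ((hcont2.continuousOn.integrableOn_compact
      (isCompact_Icc.prod isCompact_Icc)).mono_set
      (prod_mono Ioc_subset_Icc_self Ioc_subset_Icc_self))
  rw [hswap]
  -- Step 4: compute inner integral in t
  have hinner : ∀ u : ℝ, (∫ t in (0:ℝ)..1, min (1 - F u) t) = 1 / 2 - F u ^ 2 / 2 := by
    intro u
    set a := 1 - F u with ha
    have ha0 : 0 ≤ a := by have := (hF01 u).2; simp only [ha]; linarith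
    have ha1 : a ≤ 1 := by have := (hF01 u).1; simp only [ha]; linarith
    have hi1 : IntervalIntegrable (fun t => min a t) volume 0 a :=
      (continuous_const.min continuous_id).intervalIntegrable _ _
    have hi2 : IntervalIntegrable (fun t => min a t) volume a 1 :=
      (continuous_const.min continuous_id).intervalIntegrable _ _
    have hsplit : (∫ t in (0:ℝ)..1, min a t)
        = (∫ t in (0:ℝ)..a, min a t) + ∫ t in a..1, min a t :=
      (intervalIntegral.integral_add_adjacent_intervals hi1 hi2).symm
    have h1 : (∫ t in (0:ℝ)..a, min a t) = ∫ t in (0:ℝ)..a, t := by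
      apply intervalIntegral.integral_congr
      intro t htm
      rw [uIcc_of_le ha0] at htm
      exact min_eq_right htm.2
    have h2 : (∫ t in a..1, min a t) = ∫ t in a..1, a := by
      apply intervalIntegral.integral_congr
      intro t htm
      rw [uIcc_of_le ha1] at htm
      exact min_eq_left htm.1
    rw [hsplit, h1, h2, integral_id, intervalIntegral.integral_const, smul_eq_mul, ha]
    ring
  rw [intervalIntegral.integral_congr (g := fun u => 1 / 2 - F u ^ 2 / 2)
    (fun u _ => hinner u)]
  rw [intervalIntegral.integral_sub (intervalIntegrable_const)
    ((show Continuous fun x => F x ^ 2 / 2 from (hFcont.pow 2).div_const 2).intervalIntegrable _ _),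
    intervalIntegral.integral_const, intervalIntegral.integral_div]
  simp only [hFdef, smul_eq_mul]
  ring
end

section
/- Let S ∈ [0,1] have continuous cdf F_S with 0 < E[S] < 1. Then for any family of classifiers parametrized so that ROC_SPU is well defined (TPR_SPU = E[S·Ŷ]/E[S], FPR_SPU = E[(1−S)·Ŷ]/E[1−S], AUC_SPU = ∫ TPR_SPU d(FPR_SPU)), one has AUC_SPU ≤ 1/2 + (∫₀¹ F_S(u)(1−F_S(u))du) / (2·∫₀¹ F_S(u)du·∫₀¹(1−F_S(u))du). -/
open MeasureTheory Set

private lemma integrable_of_bdd {α : Type*} [MeasurableSpace α] {μ : Measure α}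
    [IsFiniteMeasure μ] {f : α → ℝ} (hm : AEStronglyMeasurable f μ) (hb : ∀ x, |f x| ≤ 1) :
    Integrable f μ :=
  Integrable.mono' (integrable_const 1) hm (Filter.Eventually.of_forall fun x => by
    simpa using hb x)

private lemma swap_bdd {α β : Type*} [MeasurableSpace α] [MeasurableSpace β]
    {μ : Measure α} {ν : Measure β} [IsFiniteMeasure μ] [IsFiniteMeasure ν]
    (f : α → β → ℝ) (hm : Measurable (Function.uncurry f)) (hb : ∀ a b, |f a b| ≤ 1) :
    ∫ a, ∫ b, f a b ∂ν ∂μ = ∫ b, ∫ a, f a b ∂μ ∂ν :=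
  integral_integral_swap (integrable_of_bdd hm.aestronglyMeasurable (fun z => hb z.1 z.2))

private lemma deriv_nonneg_of_monotoneOn {f : ℝ → ℝ} (hf : Differentiable ℝ f)
    (hm : MonotoneOn f (Icc 0 1)) {x : ℝ} (hx : x ∈ Ioo (0:ℝ) 1) : 0 ≤ deriv f x := by
  have hd := (hf x).hasDerivAt
  rw [hasDerivAt_iff_tendsto_slope] at hd
  have hd' : Filter.Tendsto (slope f x) (nhdsWithin x (Ioi x)) (nhds (deriv f x)) :=
    hd.mono_left (nhdsWithin_mono x (fun y hy => ne_of_gt hy))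
  refine ge_of_tendsto hd' ?_
  filter_upwards [Ioo_mem_nhdsGT_of_mem (⟨le_refl x, hx.2⟩ : x ∈ Ico x 1)] with y hy
  have h1 : f x ≤ f y :=
    hm ⟨le_of_lt hx.1, le_of_lt hx.2⟩ ⟨le_of_lt (lt_trans hx.1 hy.1), le_of_lt hy.2⟩
      (le_of_lt hy.1)
  have h2 : 0 < y - x := by linarith [hy.1]
  rw [slope_def_field]
  exact div_nonneg (by linarith) (le_of_lt h2)

set_option maxHeartbeats 2000000 in
theorem auc_spu_upper_bound
    {Ω : Type*} [MeasurableSpace Ω] (μ : Measure Ω) [IsProbabilityMeasure μ]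
    (S : Ω → ℝ) (hS : Measurable S) (hS01 : ∀ ω, S ω ∈ Set.Icc (0:ℝ) 1)
    (hES0 : 0 < ∫ ω, S ω ∂μ) (hES1 : (∫ ω, S ω ∂μ) < 1)
    (hcont : Continuous fun u : ℝ => (μ {ω | S ω ≤ u}).toReal)
    (Yh : ℝ → Ω → ℝ) (hYhm : ∀ t, Measurable (Yh t))
    (hYhb : ∀ t ω, Yh t ω = 0 ∨ Yh t ω = 1)
    (hsweep : ∀ t ∈ Set.Icc (0:ℝ) 1, μ {ω | Yh t ω = 1} = ENNReal.ofReal t)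
    (TPRS FPRS : ℝ → ℝ)
    (hTPRS : ∀ t, TPRS t = (∫ ω, S ω * Yh t ω ∂μ) / (∫ ω, S ω ∂μ))
    (hFPRS : ∀ t, FPRS t = (∫ ω, (1 - S ω) * Yh t ω ∂μ) / (∫ ω, (1 - S ω) ∂μ))
    (hFdiff : Differentiable ℝ FPRS) (hFmono : MonotoneOn FPRS (Set.Icc (0:ℝ) 1)) :
    ∫ t in (0:ℝ)..1, TPRS t * deriv FPRS t
      ≤ 1 / 2 +
        (∫ u in (0:ℝ)..1,
            (μ {ω | S ω ≤ u}).toReal * (1 - (μ {ω | S ω ≤ u}).toReal)) /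
          (2 * (∫ u in (0:ℝ)..1, (μ {ω | S ω ≤ u}).toReal) *
            (∫ u in (0:ℝ)..1, (1 - (μ {ω | S ω ≤ u}).toReal))) := by
  set G : ℝ → ℝ := fun u => (μ {ω | S ω ≤ u}).toReal with hGdef
  set p : ℝ := ∫ ω, S ω ∂μ with hpdef
  have hp0 : (0:ℝ) < p := hES0
  have hp1 : p < 1 := hES1
  have hpne : p ≠ 0 := ne_of_gt hp0
  have hq0 : (0:ℝ) < 1 - p := by linarith
  have hqne : (1:ℝ) - p ≠ 0 := ne_of_gt hq0
  have hMS : ∀ u : ℝ, MeasurableSet {ω | S ω ≤ u} := fun u => hS measurableSet_Iic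
  have hGmono : Monotone G := fun u v huv =>
    ENNReal.toReal_mono (measure_ne_top μ _) (measure_mono (fun ω h => le_trans h huv))
  have hG0 : ∀ u, 0 ≤ G u := fun u => ENNReal.toReal_nonneg
  have hGle1 : ∀ u, G u ≤ 1 := by
    intro u
    have h := ENNReal.toReal_mono (measure_ne_top μ univ) (measure_mono (subset_univ {ω | S ω ≤ u}))
    simpa using h
  have hGone : G 1 = 1 := by
    have : {ω | S ω ≤ 1} = univ := eq_univ_of_forall fun ω => (hS01 ω).2
    simp [hGdef, this]
  have hGnegone : G (-1) = 0 := by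
    have : {ω | S ω ≤ -1} = ∅ := by
      ext ω; simp only [mem_setOf_eq, mem_empty_iff_false, iff_false, not_le]
      linarith [(hS01 ω).1]
    simp [hGdef, this]
  have hGSmeas : Measurable fun ω => G (S ω) := hcont.measurable.comp hS
  have hSint : Integrable S μ :=
    integrable_of_bdd hS.aestronglyMeasurable
      (fun ω => abs_le.2 ⟨by linarith [(hS01 ω).1], (hS01 ω).2⟩)
  have hq : ∫ ω, (1 - S ω) ∂μ = 1 - p := by
    rw [integral_sub (integrable_const 1) hSint]
    simp [hpdef]
  have hYabs : ∀ t ω, |Yh t ω| ≤ 1 := by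
    intro t ω; rcases hYhb t ω with h | h <;> rw [h] <;> norm_num
  have hSabs : ∀ ω, |S ω| ≤ 1 :=
    fun ω => abs_le.2 ⟨by linarith [(hS01 ω).1], (hS01 ω).2⟩
  have hQabs : ∀ ω, |1 - S ω| ≤ 1 :=
    fun ω => abs_le.2 ⟨by linarith [(hS01 ω).2], by linarith [(hS01 ω).1]⟩
  have hYint : ∀ t ∈ Icc (0:ℝ) 1, ∫ ω, Yh t ω ∂μ = t := by
    intro t ht
    have hset : MeasurableSet {ω | Yh t ω = 1} := (hYhm t) (measurableSet_singleton 1)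
    have hind : (fun ω => Yh t ω) = ({ω | Yh t ω = 1}.indicator (1 : Ω → ℝ)) := by
      funext ω
      rcases hYhb t ω with h | h <;> simp [Set.indicator_apply, h]
    rw [hind, integral_indicator_one hset, measureReal_def, hsweep t ht, ENNReal.toReal_ofReal ht.1]
  have hSYint : ∀ t, Integrable (fun ω => S ω * Yh t ω) μ := by
    intro t
    refine integrable_of_bdd ((hS.mul (hYhm t)).aestronglyMeasurable) (fun ω => ?_)
    rw [abs_mul]
    exact mul_le_one₀ (hSabs ω) (abs_nonneg _) (hYabs t ω)
  have hQYint : ∀ t, Integrable (fun ω => (1 - S ω) * Yh t ω) μ := by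
    intro t
    refine integrable_of_bdd (((measurable_const.sub hS).mul (hYhm t)).aestronglyMeasurable)
      (fun ω => ?_)
    rw [abs_mul]
    exact mul_le_one₀ (hQabs ω) (abs_nonneg _) (hYabs t ω)
  have hrel : ∀ t ∈ Icc (0:ℝ) 1, p * TPRS t + (1 - p) * FPRS t = t := by
    intro t ht
    rw [hTPRS, hFPRS, hq]
    rw [mul_div_cancel₀ _ hpne, mul_div_cancel₀ _ hqne, ← integral_add (hSYint t) (hQYint t)]
    have : (fun ω => S ω * Yh t ω + (1 - S ω) * Yh t ω) = fun ω => Yh t ω := by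
      funext ω; ring
    rw [this, hYint t ht]
  have hF0 : FPRS 0 = 0 := by
    have h0 : μ {ω | Yh 0 ω = 1} = 0 := by simpa using hsweep 0 ⟨le_refl 0, zero_le_one⟩
    have hae : ∀ᵐ ω ∂μ, (1 - S ω) * Yh 0 ω = 0 := by
      rw [ae_iff]
      refine measure_mono_null ?_ h0
      intro ω hω
      rcases hYhb 0 ω with h | h
      · exact absurd (by simp [h]) hω
      · exact h
    rw [hFPRS, integral_congr_ae (hae.mono fun ω h => h), integral_zero, zero_div]
  have hF1 : FPRS 1 = 1 := by
    have h1 : μ {ω | Yh 1 ω = 1} = 1 := by simpa using hsweep 1 ⟨zero_le_one, le_refl 1⟩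
    have hcompl : μ {ω | Yh 1 ω = 1}ᶜ = 0 := by
      rw [measure_compl (show MeasurableSet {ω | Yh 1 ω = 1} from
        (hYhm 1) (measurableSet_singleton 1)) (measure_ne_top μ _), h1, measure_univ, tsub_self]
    have hae : ∀ᵐ ω ∂μ, Yh 1 ω = 1 := by
      rw [ae_iff]; exact hcompl
    have hae2 : (fun ω => (1 - S ω) * Yh 1 ω) =ᵐ[μ] fun ω => 1 - S ω :=
      hae.mono fun ω h => by dsimp only; rw [h, mul_one]
    rw [hFPRS, integral_congr_ae hae2, hq, div_self hqne]
  -- FTC part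
  have hFc : Continuous FPRS := hFdiff.continuous
  have hF'nn : ∀ x ∈ Ioo (0:ℝ) 1, 0 ≤ deriv FPRS x :=
    fun x hx => deriv_nonneg_of_monotoneOn hFdiff hFmono hx
  have hF'int : IntervalIntegrable (deriv FPRS) volume 0 1 := by
    rw [intervalIntegrable_iff_integrableOn_Ioc_of_le zero_le_one]
    exact intervalIntegral.integrableOn_deriv_of_nonneg hFc.continuousOn
      (fun x _ => (hFdiff x).hasDerivAt) hF'nn
  have hFbdd : ∀ t ∈ Icc (0:ℝ) 1, 0 ≤ FPRS t ∧ FPRS t ≤ 1 := by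
    intro t ht
    constructor
    · rw [← hF0]; exact hFmono ⟨le_refl 0, zero_le_one⟩ ht ht.1
    · rw [← hF1]; exact hFmono ht ⟨zero_le_one, le_refl 1⟩ ht.2
  have hFF'int : IntervalIntegrable (fun t => FPRS t * deriv FPRS t) volume 0 1 := by
    rw [intervalIntegrable_iff_integrableOn_Ioc_of_le zero_le_one]
    rw [intervalIntegrable_iff_integrableOn_Ioc_of_le zero_le_one] at hF'int
    refine Integrable.mono hF'int
      ((hFc.measurable.mul (measurable_deriv FPRS)).aestronglyMeasurable) ?_
    rw [ae_restrict_iff' measurableSet_Ioc]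
    refine Filter.Eventually.of_forall fun t ht => ?_
    rw [Real.norm_eq_abs, Real.norm_eq_abs, abs_mul]
    have := hFbdd t ⟨le_of_lt ht.1, ht.2⟩
    calc |FPRS t| * |deriv FPRS t| ≤ 1 * |deriv FPRS t| := by
          apply mul_le_mul_of_nonneg_right _ (abs_nonneg _)
          rw [abs_le]; constructor <;> linarith [this.1, this.2]
      _ = |deriv FPRS t| := one_mul _
  have htF'int : IntervalIntegrable (fun t => t * deriv FPRS t) volume 0 1 := by
    rw [intervalIntegrable_iff_integrableOn_Ioc_of_le zero_le_one]
    rw [intervalIntegrable_iff_integrableOn_Ioc_of_le zero_le_one] at hF'int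
    refine Integrable.mono hF'int
      ((measurable_id.mul (measurable_deriv FPRS)).aestronglyMeasurable) ?_
    rw [ae_restrict_iff' measurableSet_Ioc]
    refine Filter.Eventually.of_forall fun t ht => ?_
    rw [Real.norm_eq_abs, Real.norm_eq_abs, abs_mul]
    calc |t| * |deriv FPRS t| ≤ 1 * |deriv FPRS t| := by
          apply mul_le_mul_of_nonneg_right _ (abs_nonneg _)
          rw [abs_le]; constructor <;> [linarith [ht.1] ; exact ht.2]
      _ = |deriv FPRS t| := one_mul _
  have hFF'val : ∫ t in (0:ℝ)..1, FPRS t * deriv FPRS t = 1/2 := by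
    have hd : ∀ x ∈ uIcc (0:ℝ) 1, HasDerivAt (fun y => FPRS y * FPRS y / 2)
        (FPRS x * deriv FPRS x) x := by
      intro x _
      have h := ((hFdiff x).hasDerivAt.mul (hFdiff x).hasDerivAt).div_const 2
      have heq : (deriv FPRS x * FPRS x + FPRS x * deriv FPRS x) / 2
          = FPRS x * deriv FPRS x := by ring
      rwa [heq] at h
    rw [intervalIntegral.integral_eq_sub_of_hasDerivAt hd hFF'int, hF1, hF0]
    norm_num
  have htF'val : ∫ t in (0:ℝ)..1, t * deriv FPRS t = 1 - ∫ t in (0:ℝ)..1, FPRS t := by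
    have hd : ∀ x ∈ uIcc (0:ℝ) 1, HasDerivAt (fun y => y * FPRS y)
        (FPRS x + x * deriv FPRS x) x := by
      intro x _
      have h := (hasDerivAt_id' (x := x)).mul (hFdiff x).hasDerivAt
      simp only [one_mul] at h; exact h
    have hsum : IntervalIntegrable (fun t => FPRS t + t * deriv FPRS t) volume 0 1 :=
      (hFc.intervalIntegrable 0 1).add htF'int
    have h := intervalIntegral.integral_eq_sub_of_hasDerivAt hd hsum
    rw [intervalIntegral.integral_add (hFc.intervalIntegrable 0 1) htF'int] at h
    rw [hF1] at h
    have : (1:ℝ) * 1 - 0 * FPRS 0 = 1 := by ring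
    rw [this] at h
    linarith
  have hAUC : ∫ t in (0:ℝ)..1, TPRS t * deriv FPRS t
      = (1/p) * (1 - ∫ t in (0:ℝ)..1, FPRS t) - ((1-p)/p) * (1/2) := by
    have hcg : EqOn (fun t => TPRS t * deriv FPRS t)
        (fun t => (1/p) * (t * deriv FPRS t) - ((1-p)/p) * (FPRS t * deriv FPRS t))
        (uIcc (0:ℝ) 1) := by
      intro t ht
      rw [uIcc_of_le zero_le_one] at ht
      have h := hrel t ht
      have hT : TPRS t = (t - (1-p) * FPRS t) / p := by
        rw [eq_div_iff hpne]; linear_combination h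
      dsimp only
      rw [hT]; ring
    rw [intervalIntegral.integral_congr hcg,
      intervalIntegral.integral_sub (htF'int.const_mul _) (hFF'int.const_mul _),
      intervalIntegral.integral_const_mul, intervalIntegral.integral_const_mul,
      htF'val, hFF'val]
  -- Fubini identities
  haveI hfin : IsFiniteMeasure (volume.restrict (Ioc (0:ℝ) 1)) := by
    constructor
    rw [Measure.restrict_apply_univ, Real.volume_Ioc]
    exact ENNReal.ofReal_lt_top
  have hindm : ∀ u : ℝ, Measurable ({ω' | S ω' ≤ u}.indicator (1 : Ω → ℝ)) :=
    fun u => measurable_one.indicator (hMS u)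
  have hindabs : ∀ (s : Set Ω) (ω : Ω), |s.indicator (1 : Ω → ℝ) ω| ≤ 1 := by
    intro s ω
    by_cases h : ω ∈ s <;> simp [Set.indicator_apply, h]
  have hinner1 : ∀ ω, (∫ u in Ioc (0:ℝ) 1, ({ω' | S ω' ≤ u}.indicator (1 : Ω → ℝ) ω))
      = 1 - S ω := by
    intro ω
    have hfun : (fun u => ({ω' | S ω' ≤ u}.indicator (1 : Ω → ℝ) ω))
        = (Ici (S ω)).indicator (1 : ℝ → ℝ) := by
      funext u
      by_cases h : S ω ≤ u <;> simp [Set.indicator_apply, h]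
    rw [hfun, integral_indicator_one measurableSet_Ici, measureReal_def,
      Measure.restrict_apply measurableSet_Ici]
    rcases eq_or_lt_of_le (hS01 ω).1 with h0 | h0
    · have hset : Ici (S ω) ∩ Ioc (0:ℝ) 1 = Ioc (0:ℝ) 1 := by
        ext x
        simp only [mem_inter_iff, mem_Ici, mem_Ioc, and_iff_right_iff_imp]
        intro hx; linarith [hx.1, h0.symm]
      rw [hset, Real.volume_Ioc]
      rw [ENNReal.toReal_ofReal (by norm_num)]
      linarith [h0.symm]
    · have hset : Ici (S ω) ∩ Ioc (0:ℝ) 1 = Icc (S ω) 1 := by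
        ext x
        simp only [mem_inter_iff, mem_Ici, mem_Ioc, mem_Icc]
        constructor
        · rintro ⟨h1, _, h3⟩; exact ⟨h1, h3⟩
        · rintro ⟨h1, h2⟩; exact ⟨h1, lt_of_lt_of_le h0 h1, h2⟩
      rw [hset, Real.volume_Icc]
      exact ENNReal.toReal_ofReal (by linarith [(hS01 ω).2])
  have huncur1 : Measurable (Function.uncurry fun (u:ℝ) (ω:Ω) =>
      ({ω' | S ω' ≤ u}.indicator (1 : Ω → ℝ) ω)) := by
    have heq : (Function.uncurry fun (u:ℝ) (ω:Ω) => ({ω' | S ω' ≤ u}.indicator (1 : Ω → ℝ) ω))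
        = fun z : ℝ × Ω => if S z.2 ≤ z.1 then (1:ℝ) else 0 := by
      funext z
      by_cases h : S z.2 ≤ z.1 <;> simp [Function.uncurry, Set.indicator_apply, h]
    rw [heq]
    exact Measurable.ite (measurableSet_le (hS.comp measurable_snd) measurable_fst)
      measurable_const measurable_const
  have hB : ∫ u in (0:ℝ)..1, G u = 1 - p := by
    rw [intervalIntegral.integral_of_le zero_le_one]
    have e1 : ∀ u : ℝ, G u = ∫ ω, ({ω' | S ω' ≤ u}.indicator (1 : Ω → ℝ) ω) ∂μ :=
      fun u => (integral_indicator_one (hMS u)).symm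
    simp_rw [e1]
    rw [swap_bdd (fun (u:ℝ) (ω:Ω) => ({ω' | S ω' ≤ u}.indicator (1 : Ω → ℝ) ω)) huncur1
      (fun u ω => hindabs _ ω)]
    simp_rw [hinner1]
    exact hq
  have hGint : IntervalIntegrable G volume 0 1 := hcont.intervalIntegrable 0 1
  have hC : ∫ u in (0:ℝ)..1, (1 - G u) = p := by
    rw [intervalIntegral.integral_sub (intervalIntegrable_const) hGint, hB,
      intervalIntegral.integral_const]
    simp
  have hA : ∫ u in (0:ℝ)..1, G u * (1 - G u)
      = (1 - p) - ∫ u in (0:ℝ)..1, (G u)^2 := by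
    have e : ∀ u : ℝ, G u * (1 - G u) = G u - (G u)^2 := fun u => by ring
    simp_rw [e]
    rw [intervalIntegral.integral_sub (g := fun u => G u ^ 2) hGint ((hcont.pow 2).intervalIntegrable 0 1), hB]
  -- key bound
  have hGS01 : ∀ ω, 0 ≤ G (S ω) ∧ G (S ω) ≤ 1 := fun ω => ⟨hG0 _, hGle1 _⟩
  have hind01 : ∀ (s : Set Ω) (ω : Ω), 0 ≤ s.indicator (1 : Ω → ℝ) ω ∧
      s.indicator (1 : Ω → ℝ) ω ≤ 1 := by
    intro s ω
    by_cases h : ω ∈ s <;> simp [Set.indicator_apply, h]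
  have hint_h : ∀ u : ℝ, Integrable
      (fun ω => G (S ω) * ({ω' | S ω' ≤ u}.indicator (1:Ω → ℝ) ω)) μ := by
    intro u
    refine integrable_of_bdd ((hGSmeas.mul (hindm u)).aestronglyMeasurable) (fun ω => ?_)
    rw [abs_mul]
    exact mul_le_one₀ (abs_le.2 ⟨by linarith [(hGS01 ω).1], (hGS01 ω).2⟩) (abs_nonneg _)
      (hindabs _ ω)
  set h : ℝ → ℝ := fun u => ∫ ω, G (S ω) * ({ω' | S ω' ≤ u}.indicator (1:Ω → ℝ) ω) ∂μ
    with hhdef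
  -- pointwise square bound : (G u)^2 ≤ 2 h u  (rearrangement / symmetrization)
  have hsq : ∀ u : ℝ, (G u)^2 ≤ 2 * h u := by
    intro u
    set k : Ω → Ω → ℝ := fun a b =>
      ({x | S x ≤ S a}.indicator (1 : Ω → ℝ) b) * ({x | S x ≤ u}.indicator (1 : Ω → ℝ) a)
      with hkdef
    have hk01 : ∀ a b, 0 ≤ k a b ∧ k a b ≤ 1 := by
      intro a b
      exact ⟨mul_nonneg (hind01 _ _).1 (hind01 _ _).1,
        mul_le_one₀ (hind01 _ _).2 (hind01 _ _).1 (hind01 _ _).2⟩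
    have hkabs : ∀ a b, |k a b| ≤ 1 :=
      fun a b => abs_le.2 ⟨by linarith [(hk01 a b).1], (hk01 a b).2⟩
    have hkm : Measurable (fun z : Ω × Ω => k z.1 z.2) := by
      have heq : (fun z : Ω × Ω => k z.1 z.2) = fun z : Ω × Ω =>
          (if S z.2 ≤ S z.1 then (1:ℝ) else 0) * (if S z.1 ≤ u then (1:ℝ) else 0) := by
        funext z
        by_cases h1 : S z.2 ≤ S z.1 <;> by_cases h2 : S z.1 ≤ u <;>
          simp [hkdef, Set.indicator_apply, h1, h2]
      rw [heq]
      exact (Measurable.ite (measurableSet_le (hS.comp measurable_snd) (hS.comp measurable_fst))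
        measurable_const measurable_const).mul
        (Measurable.ite (measurableSet_le (hS.comp measurable_fst) measurable_const)
        measurable_const measurable_const)
    have hkm' : Measurable (fun z : Ω × Ω => k z.2 z.1) := hkm.comp measurable_swap
    have hsecm : ∀ a, Measurable (fun b => k a b) :=
      fun a => hkm.comp (measurable_const.prodMk measurable_id)
    have hsecm' : ∀ a, Measurable (fun b => k b a) :=
      fun a => hkm.comp (measurable_id.prodMk measurable_const)
    have hsec_int : ∀ a, Integrable (fun b => k a b) μ :=
      fun a => integrable_of_bdd (hsecm a).aestronglyMeasurable (fun b => hkabs a b)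
    have hsec_int' : ∀ a, Integrable (fun b => k b a) μ :=
      fun a => integrable_of_bdd (hsecm' a).aestronglyMeasurable (fun b => hkabs b a)
    have hh1 : h u = ∫ a, ∫ b, k a b ∂μ ∂μ := by
      simp only [hhdef]
      refine integral_congr_ae (Filter.Eventually.of_forall fun a => ?_)
      dsimp only
      simp only [hkdef]
      rw [integral_mul_const, integral_indicator_one (hMS (S a)), measureReal_def]
    have hh2 : ∫ a, ∫ b, k b a ∂μ ∂μ = h u := by
      rw [swap_bdd (fun a b => k b a) hkm' (fun a b => hkabs b a)]
      exact hh1.symm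
    have hKprod : Integrable (fun z : Ω × Ω => k z.1 z.2 + k z.2 z.1) (μ.prod μ) := by
      refine Integrable.mono' (integrable_const 2)
        ((hkm.add hkm').aestronglyMeasurable) (Filter.Eventually.of_forall fun z => ?_)
      rw [Real.norm_eq_abs]
      calc |k z.1 z.2 + k z.2 z.1| ≤ |k z.1 z.2| + |k z.2 z.1| := abs_add_le _ _
        _ ≤ 2 := by linarith [hkabs z.1 z.2, hkabs z.2 z.1]
    have hKout : Integrable (fun a => ∫ b, (k a b + k b a) ∂μ) μ := hKprod.integral_prod_left
    have hpt : ∀ a b, ({x | S x ≤ u}.indicator (1:Ω → ℝ) a) *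
        ({x | S x ≤ u}.indicator (1:Ω → ℝ) b) ≤ k a b + k b a := by
      intro a b
      by_cases h1 : S a ≤ u
      · by_cases h2 : S b ≤ u
        · rcases le_total (S b) (S a) with h3 | h3
          · have hk1 : k a b = 1 := by simp [hkdef, Set.indicator_apply, h1, h3]
            have := (hk01 b a).1
            have hle : ({x | S x ≤ u}.indicator (1:Ω → ℝ) a) *
                ({x | S x ≤ u}.indicator (1:Ω → ℝ) b) ≤ 1 :=
              mul_le_one₀ (hind01 _ _).2 (hind01 _ _).1 (hind01 _ _).2
            rw [hk1]; linarith
          · have hk1 : k b a = 1 := by simp [hkdef, Set.indicator_apply, h2, h3]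
            have := (hk01 a b).1
            have hle : ({x | S x ≤ u}.indicator (1:Ω → ℝ) a) *
                ({x | S x ≤ u}.indicator (1:Ω → ℝ) b) ≤ 1 :=
              mul_le_one₀ (hind01 _ _).2 (hind01 _ _).1 (hind01 _ _).2
            rw [hk1]; linarith
        · have hz : ({x | S x ≤ u}.indicator (1:Ω → ℝ) b) = 0 := by
            simp [Set.indicator_apply, h2]
          rw [hz, mul_zero]
          exact add_nonneg (hk01 a b).1 (hk01 b a).1
      · have hz : ({x | S x ≤ u}.indicator (1:Ω → ℝ) a) = 0 := by
          simp [Set.indicator_apply, h1]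
        rw [hz, zero_mul]
        exact add_nonneg (hk01 a b).1 (hk01 b a).1
    have hGm : (G u)^2 = ∫ a, ∫ b, (({x | S x ≤ u}.indicator (1:Ω → ℝ) a) *
        ({x | S x ≤ u}.indicator (1:Ω → ℝ) b)) ∂μ ∂μ := by
      have e1 : ∀ a, ∫ b, (({x | S x ≤ u}.indicator (1:Ω → ℝ) a) *
          ({x | S x ≤ u}.indicator (1:Ω → ℝ) b)) ∂μ
          = ({x | S x ≤ u}.indicator (1:Ω → ℝ) a) * G u := by
        intro a
        rw [integral_const_mul, integral_indicator_one (hMS u), measureReal_def]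
      simp_rw [e1]
      rw [integral_mul_const, integral_indicator_one (hMS u), measureReal_def, sq]
    have hmono1 : ∫ a, ∫ b, (({x | S x ≤ u}.indicator (1:Ω → ℝ) a) *
        ({x | S x ≤ u}.indicator (1:Ω → ℝ) b)) ∂μ ∂μ
        ≤ ∫ a, ∫ b, (k a b + k b a) ∂μ ∂μ := by
      refine integral_mono ?_ hKout ?_
      · have e1 : (fun a => ∫ b, (({x | S x ≤ u}.indicator (1:Ω → ℝ) a) *
            ({x | S x ≤ u}.indicator (1:Ω → ℝ) b)) ∂μ)
            = fun a => ({x | S x ≤ u}.indicator (1:Ω → ℝ) a) * G u := by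
          funext a
          rw [integral_const_mul, integral_indicator_one (hMS u), measureReal_def]
        rw [e1]
        refine integrable_of_bdd (((hindm u).mul measurable_const).aestronglyMeasurable)
          (fun a => ?_)
        rw [abs_mul]
        exact mul_le_one₀ (hindabs _ a) (abs_nonneg _)
          (abs_le.2 ⟨by linarith [hG0 u], hGle1 u⟩)
      · intro a
        dsimp only
        refine integral_mono (integrable_of_bdd
          ((measurable_const.mul (hindm u)).aestronglyMeasurable) fun b => ?_)
          ((hsec_int a).add (hsec_int' a)) fun b => hpt a b
        rw [abs_mul]
        exact mul_le_one₀ (hindabs _ a) (abs_nonneg _) (hindabs _ b)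
    have hsplit : ∫ a, ∫ b, (k a b + k b a) ∂μ ∂μ = 2 * h u := by
      have e1 : ∀ a, ∫ b, (k a b + k b a) ∂μ = (∫ b, k a b ∂μ) + ∫ b, k b a ∂μ :=
        fun a => integral_add (hsec_int a) (hsec_int' a)
      simp_rw [e1]
      have hi1 : Integrable (fun a => ∫ b, k a b ∂μ) μ :=
        (integrable_of_bdd hkm.aestronglyMeasurable (fun z => hkabs z.1 z.2)).integral_prod_left
      have hi2 : Integrable (fun a => ∫ b, k b a ∂μ) μ :=
        (integrable_of_bdd hkm'.aestronglyMeasurable (fun z => hkabs z.2 z.1)).integral_prod_left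
      rw [integral_add hi1 hi2, ← hh1, hh2]
      ring
    calc (G u)^2 = _ := hGm
      _ ≤ ∫ a, ∫ b, (k a b + k b a) ∂μ ∂μ := hmono1
      _ = 2 * h u := hsplit
  have hhmono : Monotone h := by
    intro u v huv
    refine integral_mono (hint_h u) (hint_h v) fun a => ?_
    dsimp only
    refine mul_le_mul_of_nonneg_left ?_ (hGS01 a).1
    exact Set.indicator_le_indicator_of_subset (fun x hx => le_trans hx huv)
      (fun _ => zero_le_one) a
  have hhint : IntervalIntegrable h volume 0 1 := (hhmono.monotoneOn _).intervalIntegrable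
  have hmono_int : ∫ u in (0:ℝ)..1, (G u)^2 ≤ ∫ u in (0:ℝ)..1, 2 * h u :=
    intervalIntegral.integral_mono_on zero_le_one ((hcont.pow 2).intervalIntegrable 0 1)
      (hhint.const_mul 2) (fun u _ => hsq u)
  have huncur2 : Measurable (Function.uncurry fun (u:ℝ) (ω:Ω) =>
      G (S ω) * ({ω' | S ω' ≤ u}.indicator (1 : Ω → ℝ) ω)) := by
    have heq : (Function.uncurry fun (u:ℝ) (ω:Ω) =>
        G (S ω) * ({ω' | S ω' ≤ u}.indicator (1 : Ω → ℝ) ω))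
        = fun z : ℝ × Ω => G (S z.2) * (if S z.2 ≤ z.1 then (1:ℝ) else 0) := by
      funext z
      by_cases hz : S z.2 ≤ z.1 <;> simp [Function.uncurry, Set.indicator_apply, hz]
    rw [heq]
    exact (hGSmeas.comp measurable_snd).mul (Measurable.ite
      (measurableSet_le (hS.comp measurable_snd) measurable_fst)
      measurable_const measurable_const)
  have hHval : ∫ u in (0:ℝ)..1, h u = ∫ ω, G (S ω) * (1 - S ω) ∂μ := by
    rw [intervalIntegral.integral_of_le zero_le_one]
    simp only [hhdef]
    rw [swap_bdd (fun (u:ℝ) (ω:Ω) => G (S ω) * ({ω' | S ω' ≤ u}.indicator (1 : Ω → ℝ) ω))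
      huncur2 (fun u ω => by
        rw [abs_mul]
        exact mul_le_one₀ (abs_le.2 ⟨by linarith [(hGS01 ω).1], (hGS01 ω).2⟩) (abs_nonneg _)
          (hindabs _ ω))]
    refine integral_congr_ae (Filter.Eventually.of_forall fun ω => ?_)
    dsimp only
    rw [integral_const_mul, hinner1]
  -- the function g
  have hindm2 : ∀ t : ℝ, MeasurableSet {ω' | 1 - t < G (S ω')} :=
    fun t => measurableSet_lt measurable_const hGSmeas
  have hint_g : ∀ t : ℝ, Integrable
      (fun ω => (1 - S ω) * ({ω' | 1 - t < G (S ω')}.indicator (1:Ω → ℝ) ω)) μ := by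
    intro t
    refine integrable_of_bdd (((measurable_const.sub hS).mul
      (measurable_one.indicator (hindm2 t))).aestronglyMeasurable) (fun ω => ?_)
    rw [abs_mul]
    exact mul_le_one₀ (hQabs ω) (abs_nonneg _) (hindabs _ ω)
  set g : ℝ → ℝ := fun t => ∫ ω, (1 - S ω) * ({ω' | 1 - t < G (S ω')}.indicator (1:Ω → ℝ) ω) ∂μ
    with hgdef
  have hgmono : Monotone g := by
    intro t1 t2 ht
    refine integral_mono (hint_g t1) (hint_g t2) fun ω => ?_
    dsimp only
    refine mul_le_mul_of_nonneg_left ?_ (by linarith [(hS01 ω).2])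
    exact Set.indicator_le_indicator_of_subset
      (fun x hx => lt_of_le_of_lt (by linarith : 1 - t2 ≤ 1 - t1) hx)
      (fun _ => zero_le_one) ω
  have hinner2 : ∀ ω, (∫ t in Ioc (0:ℝ) 1, ({ω' | 1 - t < G (S ω')}.indicator (1:Ω → ℝ) ω))
      = G (S ω) := by
    intro ω
    have hfun : (fun t => ({ω' | 1 - t < G (S ω')}.indicator (1:Ω → ℝ) ω))
        = (Ioi (1 - G (S ω))).indicator (1 : ℝ → ℝ) := by
      funext t
      by_cases hm : 1 - t < G (S ω)
      · have h2 : 1 - G (S ω) < t := by linarith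
        simp [Set.indicator_apply, hm, h2]
      · have h2 : ¬ (1 - G (S ω) < t) := fun hc => hm (by linarith)
        simp [Set.indicator_apply, hm, h2]
    rw [hfun, integral_indicator_one measurableSet_Ioi, measureReal_def,
      Measure.restrict_apply measurableSet_Ioi]
    have hset : Ioi (1 - G (S ω)) ∩ Ioc (0:ℝ) 1 = Ioc (1 - G (S ω)) 1 := by
      ext x
      simp only [mem_inter_iff, mem_Ioi, mem_Ioc]
      constructor
      · rintro ⟨h1, _, h3⟩; exact ⟨h1, h3⟩
      · rintro ⟨h1, h2⟩
        exact ⟨h1, lt_of_le_of_lt (by linarith [(hGS01 ω).2]) h1, h2⟩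
    rw [hset, Real.volume_Ioc, show (1:ℝ) - (1 - G (S ω)) = G (S ω) by ring]
    exact ENNReal.toReal_ofReal (hGS01 ω).1
  have huncur3 : Measurable (Function.uncurry fun (t:ℝ) (ω:Ω) =>
      (1 - S ω) * ({ω' | 1 - t < G (S ω')}.indicator (1:Ω → ℝ) ω)) := by
    have heq : (Function.uncurry fun (t:ℝ) (ω:Ω) =>
        (1 - S ω) * ({ω' | 1 - t < G (S ω')}.indicator (1:Ω → ℝ) ω))
        = fun z : ℝ × Ω => (1 - S z.2) * (if 1 - z.1 < G (S z.2) then (1:ℝ) else 0) := by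
      funext z
      by_cases hz : 1 - z.1 < G (S z.2) <;> simp [Function.uncurry, Set.indicator_apply, hz]
    rw [heq]
    exact (measurable_const.sub (hS.comp measurable_snd)).mul (Measurable.ite
      (measurableSet_lt (measurable_const.sub measurable_fst) (hGSmeas.comp measurable_snd))
      measurable_const measurable_const)
  have hgval : ∫ t in (0:ℝ)..1, g t = ∫ ω, (1 - S ω) * G (S ω) ∂μ := by
    rw [intervalIntegral.integral_of_le zero_le_one]
    simp only [hgdef]
    rw [swap_bdd (fun (t:ℝ) (ω:Ω) =>
        (1 - S ω) * ({ω' | 1 - t < G (S ω')}.indicator (1:Ω → ℝ) ω)) huncur3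
      (fun t ω => by
        rw [abs_mul]
        exact mul_le_one₀ (hQabs ω) (abs_nonneg _) (hindabs _ ω))]
    refine integral_congr_ae (Filter.Eventually.of_forall fun ω => ?_)
    dsimp only
    rw [integral_const_mul, hinner2]
  have hgle : ∀ t ∈ Icc (0:ℝ) 1, g t ≤ (1 - p) * FPRS t := by
    intro t ht
    have hre : (1 - p) * FPRS t = ∫ ω, (1 - S ω) * Yh t ω ∂μ := by
      rw [hFPRS, hq, mul_div_cancel₀ _ hqne]
    rw [hre]
    obtain ⟨c, hcmem, hGc⟩ := intermediate_value_Icc (show (-1:ℝ) ≤ 1 by norm_num)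
      hcont.continuousOn (show 1 - t ∈ Icc (G (-1)) (G 1) from by
        rw [hGnegone, hGone]; exact ⟨by linarith [ht.2], by linarith [ht.1]⟩)
    have hMSc : MeasurableSet {ω | c < S ω} := measurableSet_lt measurable_const hS
    have hindc_int : Integrable (fun ω => ({ω | c < S ω}.indicator (1:Ω → ℝ) ω)) μ :=
      integrable_of_bdd (measurable_one.indicator hMSc).aestronglyMeasurable
        (fun ω => hindabs _ ω)
    have hμc : ∫ ω, ({ω | c < S ω}.indicator (1:Ω → ℝ) ω) ∂μ = t := by
      rw [integral_indicator_one hMSc, measureReal_def]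
      have hcompl : {ω | c < S ω} = {ω | S ω ≤ c}ᶜ := by
        ext ω; simp [not_le]
      rw [hcompl, measure_compl (hMS c) (measure_ne_top μ _), measure_univ,
        ENNReal.toReal_sub_of_le prob_le_one ENNReal.one_ne_top]
      have hgc' : (μ {ω | S ω ≤ c}).toReal = 1 - t := hGc
      rw [ENNReal.toReal_one, hgc']
      ring
    have hQI_int : Integrable
        (fun ω => (1 - S ω) * ({ω | c < S ω}.indicator (1:Ω → ℝ) ω)) μ :=
      integrable_of_bdd (((measurable_const.sub hS).mul
        (measurable_one.indicator hMSc)).aestronglyMeasurable)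
        (fun ω => by rw [abs_mul]; exact mul_le_one₀ (hQabs ω) (abs_nonneg _) (hindabs _ ω))
    have hYt_int : Integrable (Yh t) μ :=
      integrable_of_bdd (hYhm t).aestronglyMeasurable (hYabs t)
    have step1 : g t ≤ ∫ ω, (1 - S ω) * ({ω | c < S ω}.indicator (1:Ω → ℝ) ω) ∂μ := by
      refine integral_mono (hint_g t) hQI_int fun ω => ?_
      dsimp only
      refine mul_le_mul_of_nonneg_left ?_ (by linarith [(hS01 ω).2])
      refine Set.indicator_le_indicator_of_subset ?_ (fun _ => zero_le_one) ω
      intro x hx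
      simp only [mem_setOf_eq] at hx ⊢
      by_contra hcon
      push_neg at hcon
      have hGle : G (S x) ≤ G c := hGmono hcon
      rw [hGc] at hGle
      exact absurd hx (not_lt.2 hGle)
    have step2 : ∫ ω, (1 - S ω) * ({ω | c < S ω}.indicator (1:Ω → ℝ) ω) ∂μ
        ≤ ∫ ω, (1 - S ω) * Yh t ω ∂μ := by
      have hI2 : Integrable
          (fun ω => (1 - c) * (Yh t ω - ({ω | c < S ω}.indicator (1:Ω → ℝ) ω))) μ := by
        exact (hYt_int.sub hindc_int).const_mul _
      have e2 : ∫ ω, ((1 - S ω) * ({ω | c < S ω}.indicator (1:Ω → ℝ) ω)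
          + (1 - c) * (Yh t ω - ({ω | c < S ω}.indicator (1:Ω → ℝ) ω))) ∂μ
          = ∫ ω, (1 - S ω) * ({ω | c < S ω}.indicator (1:Ω → ℝ) ω) ∂μ := by
        rw [integral_add hQI_int hI2, integral_const_mul,
          integral_sub hYt_int hindc_int, hYint t ht, hμc]
        ring
      rw [← e2]
      refine integral_mono (hQI_int.add hI2) (hQYint t) fun ω => ?_
      dsimp only
      by_cases hcs : c < S ω
      · rw [Set.indicator_of_mem (show ω ∈ {ω | c < S ω} from hcs)]
        simp only [Pi.one_apply]
        rcases hYhb t ω with hy | hy <;> rw [hy] <;>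
          nlinarith [(hS01 ω).1, (hS01 ω).2]
      · rw [Set.indicator_of_notMem (show ω ∉ {ω | c < S ω} from hcs)]
        push_neg at hcs
        rcases hYhb t ω with hy | hy <;> rw [hy] <;>
          nlinarith [(hS01 ω).1, (hS01 ω).2, hcmem.1, hcmem.2]
    exact le_trans step1 step2
  have hkey : (∫ u in (0:ℝ)..1, (G u)^2) ≤ 2 * (1-p) * ∫ t in (0:ℝ)..1, FPRS t := by
    have hgii : IntervalIntegrable g volume 0 1 := (hgmono.monotoneOn _).intervalIntegrable
    have hgF : ∫ t in (0:ℝ)..1, g t ≤ ∫ t in (0:ℝ)..1, (1 - p) * FPRS t :=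
      intervalIntegral.integral_mono_on zero_le_one hgii
        ((hFc.intervalIntegrable 0 1).const_mul _) hgle
    have hcomm : ∫ ω, G (S ω) * (1 - S ω) ∂μ = ∫ ω, (1 - S ω) * G (S ω) ∂μ :=
      integral_congr_ae (Filter.Eventually.of_forall fun ω => mul_comm _ _)
    calc (∫ u in (0:ℝ)..1, (G u)^2) ≤ ∫ u in (0:ℝ)..1, 2 * h u := hmono_int
      _ = 2 * ∫ u in (0:ℝ)..1, h u := intervalIntegral.integral_const_mul 2 h
      _ = 2 * ∫ t in (0:ℝ)..1, g t := by rw [hHval, hcomm, ← hgval]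
      _ ≤ 2 * ∫ t in (0:ℝ)..1, (1 - p) * FPRS t := by linarith [hgF]
      _ = 2 * ((1 - p) * ∫ t in (0:ℝ)..1, FPRS t) := by
          rw [intervalIntegral.integral_const_mul]
      _ = 2 * (1-p) * ∫ t in (0:ℝ)..1, FPRS t := by ring
  -- final algebra
  rw [hAUC, hA, hB, hC]
  set IF := ∫ t in (0:ℝ)..1, FPRS t with hIFdef
  set J := ∫ u in (0:ℝ)..1, (G u)^2 with hJdef
  have h2 : (0:ℝ) < 2 * (1 - p) * p := by positivity
  rw [← sub_nonneg]
  have expand : 1/2 + ((1-p) - J)/(2*(1-p)*p) - ((1/p) * (1 - IF) - ((1-p)/p) * (1/2))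
      = (2*(1-p)*IF - J) / (2*(1-p)*p) := by
    field_simp
    ring
  rw [expand]
  exact div_nonneg (by linarith) (le_of_lt h2)
end

section
/- Let S ∈ [0,1] have continuous cdf F_S with 0 < E[S] < 1. The bound B = 1/2 + (∫₀¹ F_S(u)(1−F_S(u))du)/(2∫₀¹F_S(u)du·∫₀¹(1−F_S(u))du) satisfies B ≤ 1, with equality B = 1 if and only if P(S ∈ (0,1)) = 0 (i.e., S ∈ {0,1} almost surely). -/
open MeasureTheory Set

lemma contZero {g : ℝ → ℝ} (hg : Continuous g) (hnn : ∀ x, 0 ≤ g x)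
    (hint : ∫ u in (0:ℝ)..1, g u = 0) : ∀ x ∈ Icc (0:ℝ) 1, g x = 0 := by
  have hi : IntervalIntegrable g volume 0 1 := hg.intervalIntegrable 0 1
  have h0 : (0:ℝ → ℝ) ≤ᵐ[volume.restrict (Ioc (0:ℝ) 1)] g :=
    Filter.Eventually.of_forall hnn
  have hae : g =ᵐ[volume.restrict (Ioc (0:ℝ) 1)] 0 :=
    (intervalIntegral.integral_eq_zero_iff_of_le_of_nonneg_ae zero_le_one h0 hi).mp hint
  have hae' : g =ᵐ[volume.restrict (Icc (0:ℝ) 1)] 0 := by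
    rwa [Measure.restrict_congr_set Ioc_ae_eq_Icc] at hae
  refine Measure.eqOn_of_ae_eq hae' hg.continuousOn continuous_const.continuousOn ?_
  rw [interior_Icc, closure_Ioo (by norm_num : (0:ℝ) ≠ 1)]

theorem auc_spu_bound_le_one_iff_hard_labels
    {Ω : Type*} [MeasurableSpace Ω] (μ : Measure Ω) [IsProbabilityMeasure μ]
    (S : Ω → ℝ) (hS : Measurable S) (hS01 : ∀ ω, S ω ∈ Set.Icc (0:ℝ) 1)
    (hES0 : 0 < ∫ ω, S ω ∂μ) (hES1 : (∫ ω, S ω ∂μ) < 1)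
    (hcont : Continuous fun u : ℝ => (μ {ω | S ω ≤ u}).toReal)
    (B : ℝ)
    (hB : B = 1 / 2 +
        (∫ u in (0:ℝ)..1,
            (μ {ω | S ω ≤ u}).toReal * (1 - (μ {ω | S ω ≤ u}).toReal)) /
          (2 * (∫ u in (0:ℝ)..1, (μ {ω | S ω ≤ u}).toReal) *
            (∫ u in (0:ℝ)..1, (1 - (μ {ω | S ω ≤ u}).toReal)))) :
    B ≤ 1 ∧ (B = 1 ↔ μ {ω | S ω ∈ Set.Ioo (0:ℝ) 1} = 0) := by
  set F : ℝ → ℝ := fun u => (μ {ω | S ω ≤ u}).toReal with hFdef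
  have hm : ∀ u : ℝ, MeasurableSet {ω | S ω ≤ u} := fun u => hS measurableSet_Iic
  have hFnn : ∀ u, 0 ≤ F u := fun u => ENNReal.toReal_nonneg
  have hFle1 : ∀ u, F u ≤ 1 := fun u => by
    have : (μ {ω | S ω ≤ u}).toReal ≤ (1 : ENNReal).toReal :=
      ENNReal.toReal_mono ENNReal.one_ne_top prob_le_one
    simpa using this
  have hF1 : F 1 = 1 := by
    have huniv : {ω | S ω ≤ (1:ℝ)} = univ := eq_univ_of_forall fun ω => (hS01 ω).2
    simp [hFdef, huniv]
  -- F 0 = 1 is impossible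
  have hF0 : F 0 ≠ 1 := by
    intro h
    have h1 : μ {ω | S ω ≤ (0:ℝ)} = 1 := by
      have := (ENNReal.toReal_eq_one_iff _).mp h
      exact this
    have hc : μ {ω | S ω ≤ (0:ℝ)}ᶜ = 0 := by
      rw [measure_compl (hm 0) (measure_ne_top μ _), h1, measure_univ, tsub_self]
    have hae : ∀ᵐ ω ∂μ, S ω ≤ 0 := by
      rw [ae_iff]
      convert hc using 2
      rfl
    have hze : S =ᵐ[μ] 0 := by
      filter_upwards [hae] with ω h2
      exact le_antisymm h2 (hS01 ω).1
    have : ∫ ω, S ω ∂μ = 0 := by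
      rw [integral_congr_ae hze]; simp
    linarith
  have hFcont : Continuous F := hcont
  set A := ∫ u in (0:ℝ)..1, F u with hAdef
  have hiF : IntervalIntegrable F volume 0 1 := hFcont.intervalIntegrable 0 1
  have h1F : (∫ u in (0:ℝ)..1, (1 - F u)) = 1 - A := by
    rw [intervalIntegral.integral_sub intervalIntegrable_const hiF]
    simp
    exact hAdef.symm
  have hAlt1 : A < 1 := by
    have hnn : 0 ≤ 1 - A := by
      rw [← h1F]
      exact intervalIntegral.integral_nonneg zero_le_one
        (fun u _ => sub_nonneg.mpr (hFle1 u))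
    rcases eq_or_lt_of_le hnn with h | h
    · exfalso
      have hz : (∫ u in (0:ℝ)..1, (1 - F u)) = 0 := by rw [h1F, ← h]
      have := contZero (continuous_const.sub hFcont)
        (fun x => sub_nonneg.mpr (hFle1 x)) hz 0 (by norm_num)
      exact hF0 (by have h' : 1 - F 0 = 0 := this; linarith)
    · linarith
  have hA0 : 0 < A := by
    have hnn : 0 ≤ A := intervalIntegral.integral_nonneg zero_le_one (fun u _ => hFnn u)
    rcases eq_or_lt_of_le hnn with h | h
    · exfalso
      have := contZero hFcont hFnn h.symm 1 (by norm_num)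
      rw [hF1] at this; norm_num at this
    · exact h
  -- strict Cauchy-Schwarz
  have hiF2 : IntervalIntegrable (fun u => F u ^ 2) volume 0 1 :=
    (hFcont.pow 2).intervalIntegrable 0 1
  have hsq : A ^ 2 < ∫ u in (0:ℝ)..1, F u ^ 2 := by
    have hexp : (∫ u in (0:ℝ)..1, (F u - A) ^ 2)
        = (∫ u in (0:ℝ)..1, F u ^ 2) - A ^ 2 := by
      have : ∀ u, (F u - A) ^ 2 = F u ^ 2 - (2 * A) * F u + A ^ 2 := fun u => by ring
      rw [intervalIntegral.integral_congr (fun u _ => this u)]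
      rw [intervalIntegral.integral_add ((hiF2.sub (hiF.const_mul (2*A)))) intervalIntegrable_const]
      rw [intervalIntegral.integral_sub hiF2 (hiF.const_mul (2*A))]
      rw [intervalIntegral.integral_const_mul]
      simp only [intervalIntegral.integral_const, smul_eq_mul, sub_zero, mul_one]
      rw [← hAdef]; ring
    have hpos : 0 < ∫ u in (0:ℝ)..1, (F u - A) ^ 2 := by
      have hnn : 0 ≤ ∫ u in (0:ℝ)..1, (F u - A) ^ 2 :=
        intervalIntegral.integral_nonneg zero_le_one (fun u _ => sq_nonneg _)
      rcases eq_or_lt_of_le hnn with h | h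
      · exfalso
        have := contZero ((hFcont.sub continuous_const).pow 2)
          (fun x => sq_nonneg _) h.symm 1 (by norm_num)
        have h2 : F 1 = A := by have h' : (F 1 - A) ^ 2 = 0 := this; nlinarith [sq_nonneg (F 1 - A)]
        rw [hF1] at h2; linarith
      · exact h
    linarith
  have hI : (∫ u in (0:ℝ)..1, F u * (1 - F u)) < A * (1 - A) := by
    have hexp : (∫ u in (0:ℝ)..1, F u * (1 - F u))
        = A - ∫ u in (0:ℝ)..1, F u ^ 2 := by
      have : ∀ u, F u * (1 - F u) = F u - F u ^ 2 := fun u => by ring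
      rw [intervalIntegral.integral_congr (fun u _ => this u),
        intervalIntegral.integral_sub hiF hiF2, ← hAdef]
    nlinarith
  have hden : 0 < 2 * A * (1 - A) := by nlinarith
  have hBF : B = 1 / 2 +
      (∫ u in (0:ℝ)..1, F u * (1 - F u)) /
        (2 * (∫ u in (0:ℝ)..1, F u) * (∫ u in (0:ℝ)..1, (1 - F u))) := hB
  have hBlt : B < 1 := by
    rw [hBF, h1F, ← hAdef]
    have : (∫ u in (0:ℝ)..1, F u * (1 - F u)) / (2 * A * (1 - A)) < 1 / 2 := by
      rw [div_lt_iff₀ hden]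
      nlinarith
    linarith
  -- μ {S ∈ (0,1)} ≠ 0
  have hne : μ {ω | S ω ∈ Set.Ioo (0:ℝ) 1} ≠ 0 := by
    intro h0
    have hconst : ∀ u ∈ Ico (0:ℝ) 1, F u = F 0 := by
      intro u hu
      apply le_antisymm
      · have hsub : {ω | S ω ≤ u} ⊆ {ω | S ω ≤ 0} ∪ {ω | S ω ∈ Set.Ioo (0:ℝ) 1} := by
          intro ω hω
          by_cases h : S ω ≤ 0
          · exact Or.inl h
          · exact Or.inr ⟨lt_of_not_ge h, lt_of_le_of_lt hω hu.2⟩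
        have : μ {ω | S ω ≤ u} ≤ μ {ω | S ω ≤ (0:ℝ)} := by
          calc μ {ω | S ω ≤ u} ≤ μ ({ω | S ω ≤ 0} ∪ {ω | S ω ∈ Set.Ioo (0:ℝ) 1}) :=
                measure_mono hsub
            _ ≤ μ {ω | S ω ≤ (0:ℝ)} + μ {ω | S ω ∈ Set.Ioo (0:ℝ) 1} := measure_union_le _ _
            _ = μ {ω | S ω ≤ (0:ℝ)} := by rw [h0, add_zero]
        exact ENNReal.toReal_mono (measure_ne_top μ _) this
      · exact ENNReal.toReal_mono (measure_ne_top μ _)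
          (measure_mono (fun ω (hω : S ω ≤ 0) => le_trans hω hu.1))
    have hseq : Filter.Tendsto (fun n : ℕ => (1:ℝ) - 1/(n+1)) Filter.atTop (nhds 1) := by
      have h1 : Filter.Tendsto (fun n : ℕ => 1/((n:ℝ)+1)) Filter.atTop (nhds 0) :=
        tendsto_one_div_add_atTop_nhds_zero_nat
      have := Filter.Tendsto.sub (tendsto_const_nhds (x := (1:ℝ))) h1
      simpa using this
    have h2 : Filter.Tendsto (fun n : ℕ => F (1 - 1/(n+1))) Filter.atTop (nhds (F 1)) :=
      (hFcont.tendsto 1).comp hseq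
    have h3 : ∀ n : ℕ, F (1 - 1/((n:ℝ)+1)) = F 0 := by
      intro n
      apply hconst
      constructor
      · have : 1/((n:ℝ)+1) ≤ 1 := by
          rw [div_le_one (by positivity)]
          linarith [Nat.cast_nonneg (α := ℝ) n]
        linarith
      · have : 0 < 1/((n:ℝ)+1) := by positivity
        linarith
    have h4 : Filter.Tendsto (fun _ : ℕ => F 0) Filter.atTop (nhds (F 1)) := by
      rwa [show (fun n : ℕ => F (1 - 1/((n:ℝ)+1))) = fun _ : ℕ => F 0 from funext h3] at h2
    have h5 : F 1 = F 0 := tendsto_nhds_unique h4 tendsto_const_nhds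
    exact hF0 (by rw [← h5, hF1])
  exact ⟨hBlt.le, ⟨fun h => absurd h hBlt.ne, fun h => absurd h hne⟩⟩
end
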